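/- arXiv:1102.5664 — 7 statements merged into one kernel-verified Lean document; each statement's English description precedes it below -/
import Mathlib

section
/- Let n ≥ 3 and let F_{n+1} be the free group with basis {a_0, a_1, …, a_n}. Let w be an element of the subgroup generated by a_1, …, a_{n−2}, and let p and q be distinct non-zero integers. Then the endomorphism T of F_{n+1} determined by a_{n−1} ↦ a_{n−1}w^p, a_n ↦ a_n w^q and a_i ↦ a_i for i ∉ {n−1, n} is an automorphism, and in Aut(F_{n+1}) the following relations hold: T∘R_w = R_w∘T, T∘R_{a_{n−1}}∘T^{−1} = R_{a_{n−1}}∘R_w^p, and T∘R_{a_n}∘T^{−1} = R_{a_n}∘R_w^q. (Consequently, the assignment α ↦ R_w, β ↦ R_{a_{n−1}}, γ ↦ R_{a_n}, t ↦ T defines a homomorphism to Aut(F_{n+1}) from the group G_{p,q} = ⟨α,β,γ,t ∣ [t,α], tβt^{−1} = βα^p, tγt^{−1} = γα^q⟩.) -/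
set_option maxHeartbeats 1000000

private lemma fix_of_closure {G : Type*} [Group G] {S : Set G} (f : G →* G)
    (h : ∀ x ∈ S, f x = x) {w : G} (hw : w ∈ Subgroup.closure S) : f w = w := by
  induction hw using Subgroup.closure_induction with
  | mem x hx => exact h x hx
  | one => simp
  | mul x y _ _ hx hy => simp [map_mul, hx, hy]
  | inv x _ hx => simp [map_inv, hx]

private lemma mulaut_pow_fix {G : Type*} [Group G] (α : MulAut G) {x : G} (h : α x = x)
    (m : ℕ) : (α ^ m) x = x := by
  induction m with
  | zero => simp
  | succ m ih => rw [pow_succ', MulAut.mul_apply, ih, h]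

private lemma mulaut_inv_fix {G : Type*} [Group G] (α : MulAut G) {x : G} (h : α x = x) :
    α⁻¹ x = x := by
  rw [MulAut.inv_def]
  exact (MulEquiv.symm_apply_eq α).mpr h.symm

private lemma mulaut_zpow_fix {G : Type*} [Group G] (α : MulAut G) {x : G} (h : α x = x)
    (k : ℤ) : (α ^ k) x = x := by
  cases k with
  | ofNat m => rw [Int.ofNat_eq_coe, zpow_natCast]; exact mulaut_pow_fix α h m
  | negSucc m =>
    rw [zpow_negSucc]
    exact mulaut_inv_fix _ (mulaut_pow_fix α h (m + 1))

private lemma mulaut_pow_apply {G : Type*} [Group G] (α : MulAut G) {a w : G}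
    (ha : α a = a * w) (hw : α w = w) (m : ℕ) : (α ^ m) a = a * w ^ m := by
  induction m with
  | zero => simp
  | succ m ih =>
    rw [pow_succ', MulAut.mul_apply, ih, map_mul, ha, map_pow, hw, pow_succ', mul_assoc]

private lemma mulaut_zpow_apply {G : Type*} [Group G] (α : MulAut G) {a w : G}
    (ha : α a = a * w) (hw : α w = w) (k : ℤ) : (α ^ k) a = a * w ^ k := by
  have hia : α⁻¹ a = a * w⁻¹ := by
    have h2 : α (a * w⁻¹) = a := by
      rw [map_mul, ha, map_inv, hw, mul_assoc, mul_inv_cancel, mul_one]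
    rw [MulAut.inv_def]
    exact (MulEquiv.symm_apply_eq α).mpr h2.symm
  have hiw : α⁻¹ w⁻¹ = w⁻¹ := by rw [map_inv, mulaut_inv_fix α hw]
  cases k with
  | ofNat m => rw [Int.ofNat_eq_coe, zpow_natCast, zpow_natCast]; exact mulaut_pow_apply α ha hw m
  | negSucc m =>
    rw [zpow_negSucc, zpow_negSucc, ← inv_pow, ← inv_pow]
    exact mulaut_pow_apply α⁻¹ hia hiw (m + 1)

/-- For `n ≥ 3`, the endomorphism `T` of the free group `F_{n+1}`
(with basis `a_0, …, a_n`) determined by `a_{n-1} ↦ a_{n-1} w^p`, `a_n ↦ a_n w^q`,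
`a_i ↦ a_i` otherwise, is an automorphism, and it satisfies the relations
`T R_w = R_w T`, `T R_{a_{n-1}} T⁻¹ = R_{a_{n-1}} R_w^p`, `T R_{a_n} T⁻¹ = R_{a_n} R_w^q`. -/
theorem stmt0 (n : ℕ) (hn : 3 ≤ n) (p q : ℤ) (hp : p ≠ 0) (hq : q ≠ 0) (hpq : p ≠ q)
    (w : FreeGroup (Fin (n + 1)))
    (hw : w ∈ Subgroup.closure
      {x : FreeGroup (Fin (n + 1)) |
        ∃ i : Fin (n + 1), 1 ≤ (i : ℕ) ∧ (i : ℕ) ≤ n - 2 ∧ x = FreeGroup.of i})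
    (Rw Rb Rc : MulAut (FreeGroup (Fin (n + 1))))
    (hRw0 : Rw (FreeGroup.of 0) = FreeGroup.of 0 * w)
    (hRw : ∀ i : Fin (n + 1), i ≠ 0 → Rw (FreeGroup.of i) = FreeGroup.of i)
    (hRb0 : Rb (FreeGroup.of 0) = FreeGroup.of 0 * FreeGroup.of (⟨n - 1, by omega⟩ : Fin (n + 1)))
    (hRb : ∀ i : Fin (n + 1), i ≠ 0 → Rb (FreeGroup.of i) = FreeGroup.of i)
    (hRc0 : Rc (FreeGroup.of 0) = FreeGroup.of 0 * FreeGroup.of (⟨n, by omega⟩ : Fin (n + 1)))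
    (hRc : ∀ i : Fin (n + 1), i ≠ 0 → Rc (FreeGroup.of i) = FreeGroup.of i) :
    ∃ T : MulAut (FreeGroup (Fin (n + 1))),
      T (FreeGroup.of (⟨n - 1, by omega⟩ : Fin (n + 1)))
        = FreeGroup.of (⟨n - 1, by omega⟩ : Fin (n + 1)) * w ^ p ∧
      T (FreeGroup.of (⟨n, by omega⟩ : Fin (n + 1)))
        = FreeGroup.of (⟨n, by omega⟩ : Fin (n + 1)) * w ^ q ∧
      (∀ i : Fin (n + 1), (i : ℕ) ≠ n - 1 → (i : ℕ) ≠ n →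
        T (FreeGroup.of i) = FreeGroup.of i) ∧
      T * Rw = Rw * T ∧
      T * Rb * T⁻¹ = Rb * Rw ^ p ∧
      T * Rc * T⁻¹ = Rc * Rw ^ q := by
  classical
  -- the defining map of T (and of its inverse, with P = -p, Q = -q)
  let f : ℤ → ℤ → Fin (n + 1) → FreeGroup (Fin (n + 1)) := fun P Q i =>
    if (i : ℕ) = n - 1 then FreeGroup.of i * w ^ P
    else if (i : ℕ) = n then FreeGroup.of i * w ^ Q else FreeGroup.of i
  -- lifts fix w
  have hfixw : ∀ P Q : ℤ, FreeGroup.lift (f P Q) w = w := by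
    intro P Q
    refine fix_of_closure _ ?_ hw
    rintro x ⟨i, h1, h2, rfl⟩
    have hne1 : (i : ℕ) ≠ n - 1 := by omega
    have hne2 : (i : ℕ) ≠ n := by omega
    simp [f, FreeGroup.lift_apply_of, hne1, hne2]
  -- compositions are the identity
  have hcomp : ∀ P Q : ℤ,
      (FreeGroup.lift (f P Q)).comp (FreeGroup.lift (f (-P) (-Q))) = MonoidHom.id (FreeGroup (Fin (n + 1))) := by
    intro P Q
    have hnn : ¬ n = n - 1 := by omega
    refine FreeGroup.ext_hom _ _ fun i => ?_
    simp only [MonoidHom.comp_apply, MonoidHom.id_apply, FreeGroup.lift_apply_of]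
    by_cases h1 : (i : ℕ) = n - 1
    · simp [f, FreeGroup.lift_apply_of, h1, map_mul, map_zpow, hfixw, mul_assoc, ← zpow_add]
    · by_cases h2 : (i : ℕ) = n
      · simp [f, FreeGroup.lift_apply_of, h1, h2, hnn, map_mul, map_zpow, hfixw, mul_assoc, ← zpow_add]
      · simp [f, FreeGroup.lift_apply_of, h1, h2]
  have hc1 := hcomp p q
  have hc2 := hcomp (-p) (-q)
  rw [neg_neg, neg_neg] at hc2
  let T : MulAut (FreeGroup (Fin (n + 1))) :=
    { toFun := FreeGroup.lift (f p q)
      invFun := FreeGroup.lift (f (-p) (-q))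
      left_inv := fun x => by
        have := DFunLike.congr_fun hc2 x
        simpa using this
      right_inv := fun x => by
        have := DFunLike.congr_fun hc1 x
        simpa using this
      map_mul' := map_mul _ }
  have hb0 : ((⟨n - 1, by omega⟩ : Fin (n + 1)) : ℕ) = n - 1 := rfl
  have hc0 : ((⟨n, by omega⟩ : Fin (n + 1)) : ℕ) = n := rfl
  have hbne : (⟨n - 1, by omega⟩ : Fin (n + 1)) ≠ 0 := by
    simp [Fin.ext_iff]; omega
  have hcne : (⟨n, by omega⟩ : Fin (n + 1)) ≠ 0 := by
    simp [Fin.ext_iff]; omega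
  -- values of T on generators
  have hTb' : ∀ i : Fin (n + 1), (i : ℕ) = n - 1 →
      T (FreeGroup.of i) = FreeGroup.of i * w ^ p := by
    intro i h
    show FreeGroup.lift (f p q) (FreeGroup.of i) = FreeGroup.of i * w ^ p
    simp [f, FreeGroup.lift_apply_of, h]
  have hTc' : ∀ i : Fin (n + 1), (i : ℕ) = n →
      T (FreeGroup.of i) = FreeGroup.of i * w ^ q := by
    intro i h
    have hnn : ¬ n = n - 1 := by omega
    show FreeGroup.lift (f p q) (FreeGroup.of i) = FreeGroup.of i * w ^ q
    simp [f, FreeGroup.lift_apply_of, h, hnn]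
  have hTb := hTb' ⟨n - 1, by omega⟩ rfl
  have hTc := hTc' ⟨n, by omega⟩ rfl
  have hTi : ∀ i : Fin (n + 1), (i : ℕ) ≠ n - 1 → (i : ℕ) ≠ n →
      T (FreeGroup.of i) = FreeGroup.of i := by
    intro i h1 h2
    show FreeGroup.lift (f p q) (FreeGroup.of i) = FreeGroup.of i
    simp [f, FreeGroup.lift_apply_of, h1, h2]
  have hTw : T w = w := hfixw p q
  have hT0 : T (FreeGroup.of 0) = FreeGroup.of 0 := hTi 0 (by omega) (by omega)
  -- fixed elements of the various automorphisms
  have fixAut : ∀ A : MulAut (FreeGroup (Fin (n + 1))), (∀ i : Fin (n + 1), i ≠ 0 → A (FreeGroup.of i) = FreeGroup.of i) →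
      A w = w := by
    intro A hA
    refine fix_of_closure A.toMonoidHom ?_ hw
    rintro x ⟨i, h1, h2, rfl⟩
    exact hA i (by rw [ne_eq, Fin.ext_iff, Fin.val_zero]; omega)
  have hRww : Rw w = w := fixAut Rw hRw
  have hRbw : Rb w = w := fixAut Rb hRb
  have hRcw : Rc w = w := fixAut Rc hRc
  have hRwp0 : (Rw ^ p) (FreeGroup.of 0) = FreeGroup.of 0 * w ^ p :=
    mulaut_zpow_apply Rw hRw0 hRww p
  have hRwq0 : (Rw ^ q) (FreeGroup.of 0) = FreeGroup.of 0 * w ^ q :=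
    mulaut_zpow_apply Rw hRw0 hRww q
  have hRwpi : ∀ (k : ℤ) (i : Fin (n + 1)), i ≠ 0 → (Rw ^ k) (FreeGroup.of i) = FreeGroup.of i :=
    fun k i hi => mulaut_zpow_fix Rw (hRw i hi) k
  have hRwpw : ∀ k : ℤ, (Rw ^ k) w = w := fun k => mulaut_zpow_fix Rw hRww k
  -- extensionality for MulAut of a free group
  have ext_aut : ∀ A B : MulAut (FreeGroup (Fin (n + 1))),
      (∀ i : Fin (n + 1), A (FreeGroup.of i) = B (FreeGroup.of i)) → A = B := by
    intro A B h
    apply MulEquiv.toMonoidHom_injective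
    exact FreeGroup.ext_hom _ _ h
  -- a convenient case split on generators
  have gen_cases : ∀ i : Fin (n + 1),
      i = 0 ∨ (i ≠ 0 ∧ ((i : ℕ) = n - 1 ∨ (i : ℕ) = n ∨ ((i : ℕ) ≠ n - 1 ∧ (i : ℕ) ≠ n))) := by
    intro i
    by_cases h : i = 0
    · exact Or.inl h
    · exact Or.inr ⟨h, by omega⟩
  refine ⟨T, hTb, hTc, hTi, ?_, ?_, ?_⟩
  · -- T * Rw = Rw * T
    refine ext_aut _ _ fun i => ?_
    rw [MulAut.mul_apply, MulAut.mul_apply]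
    rcases gen_cases i with rfl | ⟨hi, hcase⟩
    · rw [hRw0, map_mul, hT0, hTw, hRw0]
    · have hRwi := hRw i hi
      rcases hcase with h1 | h2 | ⟨h1, h2⟩
      · rw [hRwi, hTb' i h1, map_mul, hRwi, map_zpow, hRww]
      · rw [hRwi, hTc' i h2, map_mul, hRwi, map_zpow, hRww]
      · rw [hRwi, hTi i h1 h2, hRwi]
  · -- T * Rb * T⁻¹ = Rb * Rw ^ p
    rw [mul_inv_eq_iff_eq_mul]
    refine ext_aut _ _ fun i => ?_
    rw [MulAut.mul_apply, MulAut.mul_apply, MulAut.mul_apply]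
    rcases gen_cases i with rfl | ⟨hi, hcase⟩
    · rw [hRb0, map_mul, hT0, hTb, hRwp0, map_mul, hRb0, map_zpow, hRbw, mul_assoc]
    · have hRbi := hRb i hi
      rcases hcase with h1 | h2 | ⟨h1, h2⟩
      · rw [hRbi, hTb' i h1, map_mul, hRwpi p i hi, map_zpow, hRwpw p,
          map_mul, hRb i hi, map_zpow, hRbw]
      · rw [hRbi, hTc' i h2, map_mul, hRwpi p i hi, map_zpow, hRwpw p,
          map_mul, hRb i hi, map_zpow, hRbw]
      · rw [hRbi, hTi i h1 h2, hRwpi p i hi, hRbi]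
  · -- T * Rc * T⁻¹ = Rc * Rw ^ q
    rw [mul_inv_eq_iff_eq_mul]
    refine ext_aut _ _ fun i => ?_
    rw [MulAut.mul_apply, MulAut.mul_apply, MulAut.mul_apply]
    rcases gen_cases i with rfl | ⟨hi, hcase⟩
    · rw [hRc0, map_mul, hT0, hTc, hRwq0, map_mul, hRc0, map_zpow, hRcw, mul_assoc]
    · have hRci := hRc i hi
      rcases hcase with h1 | h2 | ⟨h1, h2⟩
      · rw [hRci, hTb' i h1, map_mul, hRwpi q i hi, map_zpow, hRwpw q,
          map_mul, hRc i hi, map_zpow, hRcw]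
      · rw [hRci, hTc' i h2, map_mul, hRwpi q i hi, map_zpow, hRwpw q,
          map_mul, hRc i hi, map_zpow, hRcw]
      · rw [hRci, hTi i h1 h2, hRwpi q i hi, hRci]
end

section
/- Let F_3 be the free group with basis {a_1, a_2, a_3}. The four automorphisms λ_{21}, ρ_{21}, λ_{31}, ρ_{31} ∈ Aut(F_3) pairwise commute, and the subgroup Λ = ⟨λ_{21}, ρ_{21}, λ_{31}, ρ_{31}⟩ of Aut(F_3) is free abelian of rank 4: the homomorphism ℤ^4 → Aut(F_3) sending (k,l,m,n) to λ_{21}^k ρ_{21}^l λ_{31}^m ρ_{31}^n is injective. -/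
open FreeGroup

open FreeGroup

def eperm : Equiv.Perm (ℤ × ℤ) where
  toFun z := (z.1 + 1, z.2)
  invFun z := (z.1 - 1, z.2)
  left_inv z := by simp
  right_inv z := by simp

def fperm : Equiv.Perm (ℤ × ℤ) where
  toFun z := (z.1, z.2 + z.1)
  invFun z := (z.1, z.2 - z.1)
  left_inv z := by simp
  right_inv z := by simp

lemma eperm_zpow (p : ℤ) : ∀ z : ℤ × ℤ, (eperm ^ p) z = (z.1 + p, z.2) := by
  induction p using Int.induction_on with
  | zero => intro z; simp
  | succ n ih =>
      intro z
      rw [zpow_add_one, Equiv.Perm.mul_apply]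
      have h1 : eperm z = (z.1 + 1, z.2) := rfl
      rw [h1, ih]; simp; ring
  | pred n ih =>
      intro z
      rw [zpow_sub_one, Equiv.Perm.mul_apply]
      have h1 : eperm⁻¹ z = (z.1 - 1, z.2) := rfl
      rw [h1, ih]; simp; ring

lemma fix_zpow {G : Type*} [Group G] (φ : MulAut G) (a : G) (ha : φ a = a) (k : ℤ) :
    (φ ^ k) a = a := by
  have hinv : φ⁻¹ a = a := by
    show φ.symm a = a
    rw [MulEquiv.symm_apply_eq, ha]
  induction k using Int.induction_on with
  | zero => rfl
  | succ n ih => rw [zpow_add_one, MulAut.mul_apply, ha, ih]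
  | pred n ih => rw [zpow_sub_one, MulAut.mul_apply]; show (φ ^ (-(n:ℤ))) (φ⁻¹ a) = a; rw [hinv, ih]

lemma autConjZpow {G : Type*} [Group G] (φ : MulAut G) (a b : G) (ha : φ a = a) (s t : ℤ)
    (hb : φ b = a ^ s * b * a ^ t) (k : ℤ) : (φ ^ k) b = a ^ (s * k) * b * a ^ (t * k) := by
  have hinv : φ⁻¹ b = a ^ (-s) * b * a ^ (-t) := by
    show φ.symm b = _
    rw [MulEquiv.symm_apply_eq]
    rw [_root_.map_mul, _root_.map_mul, _root_.map_zpow, _root_.map_zpow, ha, hb]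
    group
  induction k using Int.induction_on with
  | zero => simp
  | succ n ih =>
      rw [zpow_add_one, MulAut.mul_apply, hb, _root_.map_mul, _root_.map_mul, _root_.map_zpow, _root_.map_zpow,
        fix_zpow φ a ha, ih]
      rw [mul_add, mul_add, mul_one, mul_one, zpow_add, zpow_add]
      group
  | pred n ih =>
      rw [zpow_sub_one, MulAut.mul_apply]
      show (φ ^ (-(n:ℤ))) (φ⁻¹ b) = _
      rw [hinv, _root_.map_mul, _root_.map_mul, _root_.map_zpow, _root_.map_zpow, fix_zpow φ a ha, ih]
      rw [mul_sub, mul_sub, mul_one, mul_one, zpow_sub, zpow_sub]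
      group

lemma keylemma (j : Fin 3) (hj : j ≠ 0) {p q p' q' : ℤ}
    (h : (of 0 : FreeGroup (Fin 3)) ^ p * of j * of 0 ^ q = of 0 ^ p' * of j * of 0 ^ q') :
    p = p' ∧ q = q' := by
  set φ := FreeGroup.lift (fun i : Fin 3 => if i = 0 then eperm else if i = j then fperm else 1)
    with hφ
  have h0 : φ (of 0) = eperm := by simp [hφ]
  have hjf : φ (of j) = fperm := by simp [hφ, hj]
  have h2 := congrArg φ h
  simp only [_root_.map_mul, _root_.map_zpow, h0, hjf] at h2
  have h3 := congrArg (fun g : Equiv.Perm (ℤ × ℤ) => g ((0 : ℤ), (0 : ℤ))) h2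
  have hf : ∀ z : ℤ × ℤ, fperm z = (z.1, z.2 + z.1) := fun _ => rfl
  simp only [Equiv.Perm.mul_apply, eperm_zpow, hf] at h3
  simp only [Prod.mk.injEq] at h3
  omega

lemma mulaut_ext_gen {φ ψ : MulAut (FreeGroup (Fin 3))} (h : ∀ i, φ (of i) = ψ (of i)) :
    φ = ψ :=
  MulEquiv.toMonoidHom_injective (FreeGroup.ext_hom _ _ h)




/-- In `Aut(F_3)` (basis `a_1 = of 0, a_2 = of 1, a_3 = of 2`), the
Nielsen transformations `λ_{21}, ρ_{21}, λ_{31}, ρ_{31}` pairwise commute, and they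
generate a free abelian group of rank 4: `(k,l,m,n) ↦ λ_{21}^k ρ_{21}^l λ_{31}^m ρ_{31}^n`
is injective on `ℤ⁴`. -/
theorem stmt3 (lam21 rho21 lam31 rho31 : MulAut (FreeGroup (Fin 3)))
    (hl1 : lam21 (FreeGroup.of 1) = FreeGroup.of 0 * FreeGroup.of 1)
    (hl2 : lam21 (FreeGroup.of 0) = FreeGroup.of 0)
    (hl3 : lam21 (FreeGroup.of 2) = FreeGroup.of 2)
    (hr1 : rho21 (FreeGroup.of 1) = FreeGroup.of 1 * FreeGroup.of 0)
    (hr2 : rho21 (FreeGroup.of 0) = FreeGroup.of 0)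
    (hr3 : rho21 (FreeGroup.of 2) = FreeGroup.of 2)
    (hl1' : lam31 (FreeGroup.of 2) = FreeGroup.of 0 * FreeGroup.of 2)
    (hl2' : lam31 (FreeGroup.of 0) = FreeGroup.of 0)
    (hl3' : lam31 (FreeGroup.of 1) = FreeGroup.of 1)
    (hr1' : rho31 (FreeGroup.of 2) = FreeGroup.of 2 * FreeGroup.of 0)
    (hr2' : rho31 (FreeGroup.of 0) = FreeGroup.of 0)
    (hr3' : rho31 (FreeGroup.of 1) = FreeGroup.of 1) :
    (Commute lam21 rho21 ∧ Commute lam21 lam31 ∧ Commute lam21 rho31 ∧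
      Commute rho21 lam31 ∧ Commute rho21 rho31 ∧ Commute lam31 rho31) ∧
    Function.Injective (fun v : ℤ × ℤ × ℤ × ℤ =>
      lam21 ^ v.1 * rho21 ^ v.2.1 * lam31 ^ v.2.2.1 * rho31 ^ v.2.2.2) := by
  have com : ∀ (φ ψ : MulAut (FreeGroup (Fin 3))),
      (∀ i : Fin 3, φ (ψ (of i)) = ψ (φ (of i))) → Commute φ ψ := by
    intro φ ψ h
    exact mulaut_ext_gen fun i => by
      rw [MulAut.mul_apply, MulAut.mul_apply]; exact h i
  constructor
  · refine ⟨com _ _ ?_, com _ _ ?_, com _ _ ?_, com _ _ ?_, com _ _ ?_, com _ _ ?_⟩ <;>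
      (intro i; fin_cases i) <;>
      simp [_root_.map_mul, hl1, hl2, hl3, hr1, hr2, hr3, hl1', hl2', hl3', hr1', hr2', hr3',
        mul_assoc]
  · intro v w h
    obtain ⟨k, l, m, n⟩ := v
    obtain ⟨k', l', m', n'⟩ := w
    dsimp only at h
    have val1 : ∀ (k l m n : ℤ),
        (lam21 ^ k * rho21 ^ l * lam31 ^ m * rho31 ^ n) (of 1) = of 0 ^ k * of 1 * of 0 ^ l := by
      intro k l m n
      rw [MulAut.mul_apply, MulAut.mul_apply, MulAut.mul_apply]
      rw [fix_zpow rho31 _ hr3', fix_zpow lam31 _ hl3']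
      have hR : (rho21 ^ l) (of 1) = of 1 * of 0 ^ l := by
        have := autConjZpow rho21 (of 0) (of 1) hr2 0 1 (by simpa using hr1) l
        simpa using this
      rw [hR, _root_.map_mul, _root_.map_zpow, fix_zpow lam21 _ hl2]
      have hL : (lam21 ^ k) (of 1) = of 0 ^ k * of 1 := by
        have := autConjZpow lam21 (of 0) (of 1) hl2 1 0 (by simpa using hl1) k
        simpa using this
      rw [hL, mul_assoc]
    have val2 : ∀ (k l m n : ℤ),
        (lam21 ^ k * rho21 ^ l * lam31 ^ m * rho31 ^ n) (of 2) = of 0 ^ m * of 2 * of 0 ^ n := by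
      intro k l m n
      rw [MulAut.mul_apply, MulAut.mul_apply, MulAut.mul_apply]
      have hR : (rho31 ^ n) (of 2) = of 2 * of 0 ^ n := by
        have := autConjZpow rho31 (of 0) (of 2) hr2' 0 1 (by simpa using hr1') n
        simpa using this
      rw [hR, _root_.map_mul, _root_.map_zpow, fix_zpow lam31 _ hl2']
      have hL : (lam31 ^ m) (of 2) = of 0 ^ m * of 2 := by
        have := autConjZpow lam31 (of 0) (of 2) hl2' 1 0 (by simpa using hl1') m
        simpa using this
      rw [hL]
      simp only [_root_.map_mul, _root_.map_zpow, fix_zpow rho21 _ hr2, fix_zpow rho21 _ hr3,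
        fix_zpow lam21 _ hl2, fix_zpow lam21 _ hl3, mul_assoc]
    have e1 := congrArg (fun g : MulAut (FreeGroup (Fin 3)) => g (of 1)) h
    have e2 := congrArg (fun g : MulAut (FreeGroup (Fin 3)) => g (of 2)) h
    simp only [val1] at e1
    simp only [val2] at e2
    obtain ⟨hk, hl⟩ := keylemma 1 (by decide) e1
    obtain ⟨hm, hn⟩ := keylemma 2 (by decide) e2
    simp [Prod.ext_iff, hk, hl, hm, hn]
end

section
/- Let F_3 be the free group with basis {a_1, a_2, a_3}. In Γ = Aut(F_3), the element λ_{21} lies in the commutator subgroup of the centralizer Z_Γ(ρ_{21}) of ρ_{21}, and the element ρ_{21} lies in the commutator subgroup of the centralizer Z_Γ(λ_{21}) of λ_{21}. -/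
open FreeGroup
open scoped commutatorElement

private def F3 := FreeGroup (Fin 3)

/-- Build an automorphism of `FreeGroup (Fin 3)` from a map on generators and an
explicit inverse map on generators. -/
def mk3 (f g : Fin 3 → FreeGroup (Fin 3))
    (h1 : ∀ i, FreeGroup.lift g (f i) = FreeGroup.of i)
    (h2 : ∀ i, FreeGroup.lift f (g i) = FreeGroup.of i) :
    MulAut (FreeGroup (Fin 3)) :=
  MonoidHom.toMulEquiv (FreeGroup.lift f) (FreeGroup.lift g)
    (FreeGroup.ext_hom _ _ (fun i => by simp [h1 i]))
    (FreeGroup.ext_hom _ _ (fun i => by simp [h2 i]))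

@[simp] lemma mk3_apply (f g : Fin 3 → FreeGroup (Fin 3)) (h1 h2) (x : FreeGroup (Fin 3)) :
    mk3 f g h1 h2 x = FreeGroup.lift f x := rfl

@[simp] lemma mk3_inv_apply (f g : Fin 3 → FreeGroup (Fin 3)) (h1 h2) (x : FreeGroup (Fin 3)) :
    (mk3 f g h1 h2)⁻¹ x = FreeGroup.lift g x := rfl

@[simp] lemma mk3_symm_apply (f g : Fin 3 → FreeGroup (Fin 3)) (h1 h2) (x : FreeGroup (Fin 3)) :
    (mk3 f g h1 h2).symm x = FreeGroup.lift g x := rfl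

lemma mulAut_ext {φ ψ : MulAut (FreeGroup (Fin 3))}
    (h : ∀ i, φ (FreeGroup.of i) = ψ (FreeGroup.of i)) : φ = ψ := by
  have : (φ : FreeGroup (Fin 3) →* FreeGroup (Fin 3)) = ψ := FreeGroup.ext_hom _ _ h
  exact MulEquiv.toMonoidHom_injective this

/-- ρ₃₁ : c ↦ c·a -/
def rr31 : MulAut (FreeGroup (Fin 3)) :=
  mk3 ![of 0, of 1, of 2 * of 0] ![of 0, of 1, of 2 * (of 0)⁻¹]
    (by intro i; fin_cases i <;> simp) (by intro i; fin_cases i <;> simp)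

/-- λ₂₃ : b ↦ c·b -/
def ll23 : MulAut (FreeGroup (Fin 3)) :=
  mk3 ![of 0, of 2 * of 1, of 2] ![of 0, (of 2)⁻¹ * of 1, of 2]
    (by intro i; fin_cases i <;> simp) (by intro i; fin_cases i <;> simp)

/-- λ₃₁ : c ↦ a·c -/
def ll31 : MulAut (FreeGroup (Fin 3)) :=
  mk3 ![of 0, of 1, of 0 * of 2] ![of 0, of 1, (of 0)⁻¹ * of 2]
    (by intro i; fin_cases i <;> simp) (by intro i; fin_cases i <;> simp)

/-- ρ₂₃ : b ↦ b·c -/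
def rr23 : MulAut (FreeGroup (Fin 3)) :=
  mk3 ![of 0, of 1 * of 2, of 2] ![of 0, of 1 * (of 2)⁻¹, of 2]
    (by intro i; fin_cases i <;> simp) (by intro i; fin_cases i <;> simp)

/-- In `Γ = Aut(F_3)` (basis `a_1 = of 0, a_2 = of 1, a_3 = of 2`),
`λ_{21}` lies in the commutator subgroup of the centralizer of `ρ_{21}`, and `ρ_{21}`
lies in the commutator subgroup of the centralizer of `λ_{21}`. -/
theorem stmt6 (lam21 rho21 : MulAut (FreeGroup (Fin 3)))
    (hl1 : lam21 (FreeGroup.of 1) = FreeGroup.of 0 * FreeGroup.of 1)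
    (hl2 : lam21 (FreeGroup.of 0) = FreeGroup.of 0)
    (hl3 : lam21 (FreeGroup.of 2) = FreeGroup.of 2)
    (hr1 : rho21 (FreeGroup.of 1) = FreeGroup.of 1 * FreeGroup.of 0)
    (hr2 : rho21 (FreeGroup.of 0) = FreeGroup.of 0)
    (hr3 : rho21 (FreeGroup.of 2) = FreeGroup.of 2) :
    lam21 ∈ ⁅Subgroup.centralizer {rho21}, Subgroup.centralizer {rho21}⁆ ∧
    rho21 ∈ ⁅Subgroup.centralizer {lam21}, Subgroup.centralizer {lam21}⁆ := by
  constructor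
  · have h1 : rr31 ∈ Subgroup.centralizer {rho21} := by
      rw [Subgroup.mem_centralizer_singleton_iff]
      apply mulAut_ext
      intro i
      fin_cases i <;>
        simp [MulAut.mul_apply, hr1, hr2, hr3, rr31, hl1, hl2, hl3]
    have h2 : ll23 ∈ Subgroup.centralizer {rho21} := by
      rw [Subgroup.mem_centralizer_singleton_iff]
      apply mulAut_ext
      intro i
      fin_cases i <;>
        simp [MulAut.mul_apply, hr1, hr2, hr3, ll23, hl1, hl2, hl3, mul_assoc]
    have key : lam21 = ⁅rr31, ll23⁆ := by
      apply mulAut_ext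
      intro i
      fin_cases i <;>
        simp [commutatorElement_def, MulAut.mul_apply, hl1, hl2, hl3, rr31, ll23, mul_assoc]
    rw [key]
    exact Subgroup.commutator_mem_commutator h1 h2
  · have h1 : ll31 ∈ Subgroup.centralizer {lam21} := by
      rw [Subgroup.mem_centralizer_singleton_iff]
      apply mulAut_ext
      intro i
      fin_cases i <;>
        simp [MulAut.mul_apply, hl1, hl2, hl3, ll31]
    have h2 : rr23 ∈ Subgroup.centralizer {lam21} := by
      rw [Subgroup.mem_centralizer_singleton_iff]
      apply mulAut_ext
      intro i
      fin_cases i <;>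
        simp [MulAut.mul_apply, hl1, hl2, hl3, rr23, mul_assoc]
    have key : rho21 = ⁅ll31, rr23⁆ := by
      apply mulAut_ext
      intro i
      fin_cases i <;>
        simp [commutatorElement_def, MulAut.mul_apply, hr1, hr2, hr3, ll31, rr23, mul_assoc]
    rw [key]
    exact Subgroup.commutator_mem_commutator h1 h2
end

section
/- Let n ≥ 6, let F_n be the free group with basis {a_1, …, a_n}, and let λ ∈ Aut(F_n) be any Nielsen transformation λ_{ij} (i ≠ j). Let Z be the centralizer of λ in Aut(F_n). Then λ lies in the commutator subgroup of Z; equivalently, the class [λ] is trivial in H_1(Z, ℤ) = Z/[Z,Z]. -/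
namespace Stmt9

open FreeGroup

variable {n : ℕ}

def mkAut (f g : Fin n → FreeGroup (Fin n))
    (hfg : ∀ x, FreeGroup.lift g (f x) = FreeGroup.of x)
    (hgf : ∀ x, FreeGroup.lift f (g x) = FreeGroup.of x) :
    MulAut (FreeGroup (Fin n)) :=
  MonoidHom.toMulEquiv (FreeGroup.lift f) (FreeGroup.lift g)
    (FreeGroup.ext_hom _ _ (by simp [hfg]))
    (FreeGroup.ext_hom _ _ (by simp [hgf]))

@[simp] lemma mkAut_of (f g hfg hgf) (x : Fin n) :
    mkAut f g hfg hgf (FreeGroup.of x) = f x := by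
  simp [mkAut, MonoidHom.toMulEquiv]

@[simp] lemma mkAut_inv_of (f g hfg hgf) (x : Fin n) :
    (mkAut f g hfg hgf)⁻¹ (FreeGroup.of x) = g x := by
  simp [mkAut, MonoidHom.toMulEquiv, MulAut.inv_def]

lemma aut_ext {e f : MulAut (FreeGroup (Fin n))}
    (h : ∀ x, e (FreeGroup.of x) = f (FreeGroup.of x)) : e = f := by
  have := FreeGroup.ext_hom (M := FreeGroup (Fin n)) e.toMonoidHom f.toMonoidHom h
  exact MulEquiv.toMonoidHom_injective this

/-- Left Nielsen transformation `a_p ↦ a_q a_p`. -/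
def LN (p q : Fin n) (h : q ≠ p) : MulAut (FreeGroup (Fin n)) :=
  mkAut (fun x => if x = p then of q * of x else of x)
    (fun x => if x = p then (of q)⁻¹ * of x else of x)
    (by intro x; by_cases hx : x = p <;> simp [hx, h, mul_assoc])
    (by intro x; by_cases hx : x = p <;> simp [hx, h, mul_assoc])

/-- Right Nielsen transformation `a_p ↦ a_p a_q`. -/
def RN (p q : Fin n) (h : q ≠ p) : MulAut (FreeGroup (Fin n)) :=
  mkAut (fun x => if x = p then of x * of q else of x)
    (fun x => if x = p then of x * (of q)⁻¹ else of x)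
    (by intro x; by_cases hx : x = p <;> simp [hx, h, mul_assoc])
    (by intro x; by_cases hx : x = p <;> simp [hx, h, mul_assoc])

@[simp] lemma LN_of (p q h) (x : Fin n) :
    LN p q h (of x) = if x = p then of q * of x else of x := by simp [LN]
@[simp] lemma LN_inv_of (p q h) (x : Fin n) :
    (LN p q h)⁻¹ (of x) = if x = p then (of q)⁻¹ * of x else of x := by
  unfold LN; exact mkAut_inv_of _ _ _ _ x
@[simp] lemma RN_of (p q h) (x : Fin n) :
    RN p q h (of x) = if x = p then of x * of q else of x := by simp [RN]
@[simp] lemma RN_inv_of (p q h) (x : Fin n) :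
    (RN p q h)⁻¹ (of x) = if x = p then of x * (of q)⁻¹ else of x := by
  unfold RN; exact mkAut_inv_of _ _ _ _ x

/-- `a_i ↦ a_k a_i`, `a_j ↦ a_k a_j a_k⁻¹`, rest fixed. -/
def AA (i j k : Fin n) (hij : i ≠ j) (hki : k ≠ i) (hkj : k ≠ j) :
    MulAut (FreeGroup (Fin n)) :=
  mkAut
    (fun x => if x = i then of k * of x else if x = j then of k * of x * (of k)⁻¹ else of x)
    (fun x => if x = i then (of k)⁻¹ * of x else if x = j then (of k)⁻¹ * of x * of k else of x)
    (by
      intro x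
      by_cases hx : x = i
      · simp [hx, hij, hki, hkj, mul_assoc]
      · by_cases hx' : x = j <;> simp [hx, hx', hij, hij.symm, hki, hkj, mul_assoc])
    (by
      intro x
      by_cases hx : x = i
      · simp [hx, hij, hki, hkj, mul_assoc]
      · by_cases hx' : x = j <;> simp [hx, hx', hij, hij.symm, hki, hkj, mul_assoc])

@[simp] lemma AA_of (i j k hij hki hkj) (x : Fin n) :
    AA i j k hij hki hkj (of x) =
      if x = i then of k * of x else if x = j then of k * of x * (of k)⁻¹ else of x := by
  simp [AA]
@[simp] lemma AA_inv_of (i j k hij hki hkj) (x : Fin n) :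
    (AA i j k hij hki hkj)⁻¹ (of x) =
      if x = i then (of k)⁻¹ * of x else if x = j then (of k)⁻¹ * of x * of k else of x := by
  unfold AA; exact mkAut_inv_of _ _ _ _ x
@[simp] lemma LN_symm_of (p q h) (x : Fin n) :
    (LN p q h).symm (of x) = if x = p then (of q)⁻¹ * of x else of x := LN_inv_of p q h x
@[simp] lemma RN_symm_of (p q h) (x : Fin n) :
    (RN p q h).symm (of x) = if x = p then of x * (of q)⁻¹ else of x := RN_inv_of p q h x
@[simp] lemma AA_symm_of (i j k hij hki hkj) (x : Fin n) :
    (AA i j k hij hki hkj).symm (of x) =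
      if x = i then (of k)⁻¹ * of x else if x = j then (of k)⁻¹ * of x * of k else of x :=
  AA_inv_of i j k hij hki hkj x

end Stmt9

open Stmt9 FreeGroup commutatorElement in
/-- For `n ≥ 6`, any Nielsen transformation `λ = λ_{ij}` (`i ≠ j`) of
the free group `F_n` lies in the commutator subgroup of its centralizer `Z` in
`Aut(F_n)`; equivalently, `[λ]` is trivial in `H_1(Z, ℤ) = Z/[Z,Z]`. -/
theorem stmt9 (n : ℕ) (hn : 6 ≤ n) (i j : Fin n) (hij : i ≠ j)
    (lam : MulAut (FreeGroup (Fin n)))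
    (h1 : lam (FreeGroup.of i) = FreeGroup.of j * FreeGroup.of i)
    (h2 : ∀ k : Fin n, k ≠ i → lam (FreeGroup.of k) = FreeGroup.of k) :
    lam ∈ ⁅Subgroup.centralizer {lam}, Subgroup.centralizer {lam}⁆ := by
  -- find two fresh indices k, l
  have hcard : 1 < (Finset.univ \ {i, j} : Finset (Fin n)).card := by
    have hsub : ({i, j} : Finset (Fin n)) ⊆ Finset.univ := Finset.subset_univ _
    have h2' : ({i, j} : Finset (Fin n)).card ≤ 2 := Finset.card_insert_le _ _ |>.trans (by simp)
    have := Finset.card_sdiff_of_subset hsub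
    have hu : (Finset.univ : Finset (Fin n)).card = n := by simp
    omega
  obtain ⟨k, hk, l, hl, hkl⟩ := Finset.one_lt_card.mp hcard
  simp only [Finset.mem_sdiff, Finset.mem_insert, Finset.mem_singleton, not_or] at hk hl
  obtain ⟨-, hki', hkj'⟩ := hk
  obtain ⟨-, hli', hlj'⟩ := hl
  have hki : k ≠ i := hki'
  have hkj : k ≠ j := hkj'
  have hli : l ≠ i := hli'
  have hlj : l ≠ j := hlj'
  have hji : j ≠ i := hij.symm
  have hik : i ≠ k := hki.symm
  have hjk : j ≠ k := hkj.symm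
  have hil : i ≠ l := hli.symm
  have hjl : j ≠ l := hlj.symm
  have hlk : l ≠ k := hkl.symm
  set A := AA i j k hij hki hkj with hA
  set B := (LN k j hjk)⁻¹ with hB
  set C := LN k l hlk with hC
  set D := RN l j hjl with hD
  set E := LN l j hjl with hE
  set F := RN k l hlk with hF
  have lam_of : ∀ x : Fin n, lam (of x) = if x = i then of j * of i else of x := by
    intro x
    by_cases hx : x = i
    · simpa [hx] using h1
    · simp [hx, h2 x hx]
  -- centralizer memberships
  have cen : ∀ g : MulAut (FreeGroup (Fin n)),
      (∀ x : Fin n, lam (g (of x)) = g (lam (of x))) →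
      g ∈ Subgroup.centralizer {lam} := by
    intro g hg
    rw [Subgroup.mem_centralizer_iff]
    intro h hh
    rw [Set.mem_singleton_iff] at hh
    subst hh
    exact aut_ext fun x => hg x
  have memA : A ∈ Subgroup.centralizer {lam} := by
    refine cen _ fun x => ?_
    rcases eq_or_ne x i with rfl | hxi
    · simp [hA, lam_of, hij, hji, hki, hkj, hik, hjk, mul_assoc]
    · rcases eq_or_ne x j with rfl | hxj
      · simp [hA, lam_of, hij, hji, hki, hkj, hik, hjk, mul_assoc]
      · simp [hA, lam_of, hxi, hxj, hij, hji, hki, hkj, hik, hjk, mul_assoc]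
  have memLkj : LN k j hjk ∈ Subgroup.centralizer {lam} := by
    refine cen _ fun x => ?_
    rcases eq_or_ne x i with rfl | hxi
    · simp [lam_of, hij, hji, hki, hkj, hik, hjk, mul_assoc]
    · rcases eq_or_ne x k with rfl | hxk
      · simp [lam_of, hij, hji, hki, hkj, hik, hjk, mul_assoc]
      · simp [lam_of, hxi, hxk, hij, hji, hki, hkj, hik, hjk, mul_assoc]
  have memB : B ∈ Subgroup.centralizer {lam} := by
    rw [hB]; exact inv_mem memLkj
  have memC : C ∈ Subgroup.centralizer {lam} := by
    refine cen _ fun x => ?_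
    rcases eq_or_ne x i with rfl | hxi
    · simp [hC, lam_of, hij, hji, hki, hkj, hik, hjk, hli, hlj, hil, hjl, hkl, hlk, mul_assoc]
    · rcases eq_or_ne x k with rfl | hxk
      · simp [hC, lam_of, hij, hji, hki, hkj, hik, hjk, hli, hlj, hil, hjl, hkl, hlk, mul_assoc]
      · simp [hC, lam_of, hxi, hxk, hij, hji, hki, hkj, hik, hjk, hli, hlj, hil, hjl, hkl,
          hlk, mul_assoc]
  have memD : D ∈ Subgroup.centralizer {lam} := by
    refine cen _ fun x => ?_
    rcases eq_or_ne x i with rfl | hxi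
    · simp [hD, lam_of, hij, hji, hki, hkj, hik, hjk, hli, hlj, hil, hjl, hkl, hlk, mul_assoc]
    · rcases eq_or_ne x l with rfl | hxl
      · simp [hD, lam_of, hij, hji, hki, hkj, hik, hjk, hli, hlj, hil, hjl, hkl, hlk, mul_assoc]
      · simp [hD, lam_of, hxi, hxl, hij, hji, hki, hkj, hik, hjk, hli, hlj, hil, hjl, hkl,
          hlk, mul_assoc]
  have memE : E ∈ Subgroup.centralizer {lam} := by
    refine cen _ fun x => ?_
    rcases eq_or_ne x i with rfl | hxi
    · simp [hE, lam_of, hij, hji, hki, hkj, hik, hjk, hli, hlj, hil, hjl, hkl, hlk, mul_assoc]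
    · rcases eq_or_ne x l with rfl | hxl
      · simp [hE, lam_of, hij, hji, hki, hkj, hik, hjk, hli, hlj, hil, hjl, hkl, hlk, mul_assoc]
      · simp [hE, lam_of, hxi, hxl, hij, hji, hki, hkj, hik, hjk, hli, hlj, hil, hjl, hkl,
          hlk, mul_assoc]
  have memF : F ∈ Subgroup.centralizer {lam} := by
    refine cen _ fun x => ?_
    rcases eq_or_ne x i with rfl | hxi
    · simp [hF, lam_of, hij, hji, hki, hkj, hik, hjk, hli, hlj, hil, hjl, hkl, hlk, mul_assoc]
    · rcases eq_or_ne x k with rfl | hxk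
      · simp [hF, lam_of, hij, hji, hki, hkj, hik, hjk, hli, hlj, hil, hjl, hkl, hlk, mul_assoc]
      · simp [hF, lam_of, hxi, hxk, hij, hji, hki, hkj, hik, hjk, hli, hlj, hil, hjl, hkl,
          hlk, mul_assoc]
  -- the key identity
  have key : lam = ⁅A, B⁆ * ⁅C, D⁆ * ⁅E, F⁆ := by
    refine aut_ext fun x => ?_
    rcases eq_or_ne x i with rfl | hxi
    · simp [commutatorElement_def, hA, hB, hC, hD, hE, hF, lam_of, hij, hji, hki, hkj, hik,
        hjk, hli, hlj, hil, hjl, hkl, hlk, mul_assoc]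
    · rcases eq_or_ne x j with rfl | hxj
      · simp [commutatorElement_def, hA, hB, hC, hD, hE, hF, lam_of, hij, hji, hki, hkj, hik,
          hjk, hli, hlj, hil, hjl, hkl, hlk, mul_assoc]
      · rcases eq_or_ne x k with rfl | hxk
        · simp [commutatorElement_def, hA, hB, hC, hD, hE, hF, lam_of, hij, hji, hki, hkj, hik,
            hjk, hli, hlj, hil, hjl, hkl, hlk, mul_assoc]
        · rcases eq_or_ne x l with rfl | hxl
          · simp [commutatorElement_def, hA, hB, hC, hD, hE, hF, lam_of, hij, hji, hki, hkj,
              hik, hjk, hli, hlj, hil, hjl, hkl, hlk, mul_assoc]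
          · simp [commutatorElement_def, hA, hB, hC, hD, hE, hF, lam_of, hxi, hxj, hxk, hxl,
              hij, hji, hki, hkj, hik, hjk, hli, hlj, hil, hjl, hkl, hlk, mul_assoc]
  have final : ⁅A, B⁆ * ⁅C, D⁆ * ⁅E, F⁆ ∈
      ⁅Subgroup.centralizer {lam}, Subgroup.centralizer {lam}⁆ := mul_mem
    (mul_mem (Subgroup.commutator_mem_commutator memA memB)
      (Subgroup.commutator_mem_commutator memC memD))
    (Subgroup.commutator_mem_commutator memE memF)
  rwa [← key] at final
end

section
/- Let n ≥ 6 and d ≥ 1, let F_n be the free group with basis {a_1, …, a_n}, and let λ ∈ Aut(F_n) be a Nielsen transformation λ_{ij} (i ≠ j). Then for every group homomorphism Φ : Aut(F_n) → SL(d, ℝ), every complex eigenvalue of the matrix Φ(λ) (regarded as a d×d complex matrix) has absolute value 1. -/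
open Module

namespace Stmt10Aux

variable {n : ℕ}

def mk (φ ψ : Fin n → FreeGroup (Fin n))
    (h1 : ∀ t, FreeGroup.lift ψ (φ t) = FreeGroup.of t)
    (h2 : ∀ t, FreeGroup.lift φ (ψ t) = FreeGroup.of t) :
    MulAut (FreeGroup (Fin n)) where
  toFun := FreeGroup.lift φ
  invFun := FreeGroup.lift ψ
  left_inv := by
    have h : (FreeGroup.lift ψ).comp (FreeGroup.lift φ) = MonoidHom.id _ :=
      FreeGroup.ext_hom _ _ (by simp [h1])
    intro x
    simpa using DFunLike.congr_fun h x
  right_inv := by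
    have h : (FreeGroup.lift φ).comp (FreeGroup.lift ψ) = MonoidHom.id _ :=
      FreeGroup.ext_hom _ _ (by simp [h2])
    intro x
    simpa using DFunLike.congr_fun h x
  map_mul' := map_mul _

@[simp] lemma mk_apply (φ ψ : Fin n → FreeGroup (Fin n)) (h1 h2) (x : FreeGroup (Fin n)) :
    mk φ ψ h1 h2 x = FreeGroup.lift φ x := rfl

@[simp] lemma mk_inv_apply (φ ψ : Fin n → FreeGroup (Fin n)) (h1 h2) (x : FreeGroup (Fin n)) :
    (mk φ ψ h1 h2)⁻¹ x = FreeGroup.lift ψ x := rfl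

@[simp] lemma mk_symm_apply (φ ψ : Fin n → FreeGroup (Fin n)) (h1 h2) (x : FreeGroup (Fin n)) :
    (mk φ ψ h1 h2).symm x = FreeGroup.lift ψ x := rfl

lemma autExt {e f : MulAut (FreeGroup (Fin n))}
    (h : ∀ t, e (FreeGroup.of t) = f (FreeGroup.of t)) : e = f :=
  MulEquiv.toMonoidHom_injective (FreeGroup.ext_hom _ _ h)

/-- left Nielsen transformation `a_s ↦ a_t a_s`. -/
def lmul (s t : Fin n) (h : t ≠ s) : MulAut (FreeGroup (Fin n)) :=
  mk (fun r => if r = s then .of t * .of s else .of r)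
     (fun r => if r = s then (.of t)⁻¹ * .of s else .of r)
     (by
       intro r
       by_cases hr : r = s
       · subst hr; simp [h]
       · simp [hr])
     (by
       intro r
       by_cases hr : r = s
       · subst hr; simp [h]
       · simp [hr])

/-- right Nielsen transformation `a_s ↦ a_s a_t`. -/
def rmul (s t : Fin n) (h : t ≠ s) : MulAut (FreeGroup (Fin n)) :=
  mk (fun r => if r = s then .of s * .of t else .of r)
     (fun r => if r = s then .of s * (.of t)⁻¹ else .of r)
     (by
       intro r
       by_cases hr : r = s
       · subst hr; simp [h, mul_assoc]
       · simp [hr])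
     (by
       intro r
       by_cases hr : r = s
       · subst hr; simp [h, mul_assoc]
       · simp [hr])

/-- `a_i ↦ a_k a_i`, `a_j ↦ a_k a_j a_k⁻¹`, rest fixed. -/
def bmap (i j k : Fin n) (hij : i ≠ j) (hki : k ≠ i) (hkj : k ≠ j) :
    MulAut (FreeGroup (Fin n)) :=
  mk (fun r => if r = i then .of k * .of i else
        if r = j then .of k * .of j * (.of k)⁻¹ else .of r)
     (fun r => if r = i then (.of k)⁻¹ * .of i else
        if r = j then (.of k)⁻¹ * .of j * .of k else .of r)
     (by
       intro r
       by_cases hr : r = i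
       · subst hr; simp [hki, hkj, hij, mul_assoc]
       · by_cases hr' : r = j
         · subst hr'; simp [hki, hkj, hij.symm, mul_assoc]
         · simp [hr, hr'])
     (by
       intro r
       by_cases hr : r = i
       · subst hr; simp [hki, hkj, hij, mul_assoc]
       · by_cases hr' : r = j
         · subst hr'; simp [hki, hkj, hij.symm, mul_assoc]
         · simp [hr, hr'])

theorem aux_abs_eq_one {V : Type*} [AddCommGroup V] [Module ℂ V] [FiniteDimensional ℂ V]
    (f a b c e g h a' b' c' e' g' h' : Module.End ℂ V)
    (ha : a * a' = 1) (ha' : a' * a = 1)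
    (hb : b * b' = 1) (hb' : b' * b = 1)
    (hc : c * c' = 1) (hc' : c' * c = 1)
    (he : e * e' = 1) (he' : e' * e = 1)
    (hg : g * g' = 1) (hg' : g' * g = 1)
    (hh : h * h' = 1) (hh' : h' * h = 1)
    (hfa : a * f = f * a) (hfb : b * f = f * b) (hfc : c * f = f * c)
    (hfe : e * f = f * e) (hfg : g * f = f * g) (hfh : h * f = f * h)
    (hprod : f = a * b * a' * b' * (c * e * c' * e') * (g * h * g' * h'))
    {μ : ℂ} {v : V} (hv : v ≠ 0) (hfv : f v = μ • v) :
    ‖μ‖ = 1 := by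
  have inv_comm : ∀ x x' : Module.End ℂ V, x * x' = 1 → x' * x = 1 →
      x * f = f * x → x' * f = f * x' := by
    intro x x' h1 h2 hxf
    calc x' * f = x' * (f * (x * x')) := by rw [h1, mul_one]
      _ = x' * ((x * f) * x') := by rw [← mul_assoc f x x', hxf]
      _ = (x' * x) * (f * x') := by simp only [mul_assoc]
      _ = f * x' := by rw [h2, one_mul]
  obtain ⟨p, hp⟩ : ∃ p : Submodule ℂ V, p = LinearMap.ker (f - μ • 1) := ⟨_, rfl⟩
  have hmem : ∀ w : V, w ∈ p ↔ f w = μ • w := by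
    intro w
    rw [hp, LinearMap.mem_ker, LinearMap.sub_apply, LinearMap.smul_apply, Module.End.one_apply,
      sub_eq_zero]
  have hvp : v ∈ p := (hmem v).mpr hfv
  have hmaps : ∀ x : Module.End ℂ V, x * f = f * x → ∀ w ∈ p, x w ∈ p := by
    intro x hx w hw
    rw [hmem] at hw ⊢
    have : f (x w) = x (f w) := by
      rw [← Module.End.mul_apply, ← hx, Module.End.mul_apply]
    rw [this, hw, map_smul]
  have hfmaps : ∀ w ∈ p, f w ∈ p := hmaps f rfl
  have hA := hmaps a hfa
  have hB := hmaps b hfb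
  have hC := hmaps c hfc
  have hE := hmaps e hfe
  have hG := hmaps g hfg
  have hH := hmaps h hfh
  have hA' := hmaps a' (inv_comm a a' ha ha' hfa)
  have hB' := hmaps b' (inv_comm b b' hb hb' hfb)
  have hC' := hmaps c' (inv_comm c c' hc hc' hfc)
  have hE' := hmaps e' (inv_comm e e' he he' hfe)
  have hG' := hmaps g' (inv_comm g g' hg hg' hfg)
  have hH' := hmaps h' (inv_comm h h' hh hh' hfh)
  have hFeq : f.restrict hfmaps = μ • (1 : Module.End ℂ p) := by
    ext w
    have hw : f ↑w = μ • (w : V) := (hmem _).mp w.2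
    simpa [LinearMap.restrict_coe_apply] using hw
  have hr : 0 < finrank ℂ p := by
    have hne : (⟨v, hvp⟩ : p) ≠ 0 := by
      simp [Submodule.mk_eq_zero, hv]
    have : Nontrivial p := nontrivial_of_ne _ _ hne
    exact Module.finrank_pos_iff.mpr this
  have hdet1 : LinearMap.det (f.restrict hfmaps) = μ ^ finrank ℂ p := by
    rw [hFeq, LinearMap.det_smul, Module.End.one_eq_id, LinearMap.det_id, mul_one]
  have pair_one : ∀ (x x' : Module.End ℂ V) (hx : ∀ w ∈ p, x w ∈ p)
      (hx' : ∀ w ∈ p, x' w ∈ p), x * x' = 1 →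
      (x.restrict hx) * (x'.restrict hx') = 1 := by
    intro x x' hx hx' hxx
    ext w
    have : (x * x') (↑w) = ↑w := by rw [hxx, Module.End.one_apply]
    simpa [Module.End.mul_apply, LinearMap.restrict_coe_apply] using this
  have hFprod : f.restrict hfmaps =
      (a.restrict hA) * (b.restrict hB) * (a'.restrict hA') * (b'.restrict hB') *
      ((c.restrict hC) * (e.restrict hE) * (c'.restrict hC') * (e'.restrict hE')) *
      ((g.restrict hG) * (h.restrict hH) * (g'.restrict hG') * (h'.restrict hH')) := by
    ext w
    have : f (↑w) = (a * b * a' * b' * (c * e * c' * e') * (g * h * g' * h')) (↑w) := by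
      rw [← hprod]
    simpa [Module.End.mul_apply, LinearMap.restrict_coe_apply] using this
  have hdet2 : LinearMap.det (f.restrict hfmaps) = 1 := by
    have p1 := congrArg LinearMap.det (pair_one a a' hA hA' ha)
    have p2 := congrArg LinearMap.det (pair_one b b' hB hB' hb)
    have p3 := congrArg LinearMap.det (pair_one c c' hC hC' hc)
    have p4 := congrArg LinearMap.det (pair_one e e' hE hE' he)
    have p5 := congrArg LinearMap.det (pair_one g g' hG hG' hg)
    have p6 := congrArg LinearMap.det (pair_one h h' hH hH' hh)
    simp only [map_mul, map_one] at p1 p2 p3 p4 p5 p6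
    rw [hFprod]
    simp only [map_mul]
    calc LinearMap.det (a.restrict hA) * LinearMap.det (b.restrict hB) *
          LinearMap.det (a'.restrict hA') * LinearMap.det (b'.restrict hB') *
          (LinearMap.det (c.restrict hC) * LinearMap.det (e.restrict hE) *
            LinearMap.det (c'.restrict hC') * LinearMap.det (e'.restrict hE')) *
          (LinearMap.det (g.restrict hG) * LinearMap.det (h.restrict hH) *
            LinearMap.det (g'.restrict hG') * LinearMap.det (h'.restrict hH'))
        = (LinearMap.det (a.restrict hA) * LinearMap.det (a'.restrict hA')) *
          (LinearMap.det (b.restrict hB) * LinearMap.det (b'.restrict hB')) *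
          ((LinearMap.det (c.restrict hC) * LinearMap.det (c'.restrict hC')) *
            (LinearMap.det (e.restrict hE) * LinearMap.det (e'.restrict hE'))) *
          ((LinearMap.det (g.restrict hG) * LinearMap.det (g'.restrict hG')) *
            (LinearMap.det (h.restrict hH) * LinearMap.det (h'.restrict hH'))) := by ring
      _ = 1 := by rw [p1, p2, p3, p4, p5, p6]; ring
  have hμpow : μ ^ finrank ℂ p = 1 := by rw [← hdet1, hdet2]
  have habs : ‖μ‖ ^ finrank ℂ p = 1 := by
    rw [← norm_pow, hμpow, norm_one]
  rcases lt_trichotomy (‖μ‖) 1 with hlt | heq | hgt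
  · exfalso
    have := pow_lt_one₀ (norm_nonneg μ) hlt hr.ne'
    rw [habs] at this; exact lt_irrefl 1 this
  · exact heq
  · exfalso
    have := one_lt_pow₀ hgt hr.ne'
    rw [habs] at this; exact lt_irrefl 1 this

def slHom (d : ℕ) : Matrix.SpecialLinearGroup (Fin d) ℝ →* Matrix (Fin d) (Fin d) ℝ where
  toFun g := ↑g
  map_one' := Matrix.SpecialLinearGroup.coe_one
  map_mul' := Matrix.SpecialLinearGroup.coe_mul

noncomputable def chi (n d : ℕ)
    (Φ : MulAut (FreeGroup (Fin n)) →* Matrix.SpecialLinearGroup (Fin d) ℝ) :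
    MulAut (FreeGroup (Fin n)) →* Module.End ℂ (Fin d → ℂ) :=
  ((Matrix.toLinAlgEquiv' :
      Matrix (Fin d) (Fin d) ℂ ≃ₐ[ℂ] Module.End ℂ (Fin d → ℂ)).toAlgHom.toRingHom.toMonoidHom).comp
    ((((algebraMap ℝ ℂ).mapMatrix :
        Matrix (Fin d) (Fin d) ℝ →+* Matrix (Fin d) (Fin d) ℂ).toMonoidHom).comp
      ((slHom d).comp Φ))

lemma chi_apply (n d : ℕ) (Φ : MulAut (FreeGroup (Fin n)) →* Matrix.SpecialLinearGroup (Fin d) ℝ)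
    (x : MulAut (FreeGroup (Fin n))) :
    chi n d Φ x = Matrix.toLinAlgEquiv' ((algebraMap ℝ ℂ).mapMatrix
      ((Φ x : Matrix (Fin d) (Fin d) ℝ))) := rfl

end Stmt10Aux

/-- For `n ≥ 6` and `d ≥ 1`, if `λ = λ_{ij}` (`i ≠ j`) is a Nielsen
transformation of the free group `F_n`, then for every homomorphism
`Φ : Aut(F_n) → SL(d, ℝ)`, every complex eigenvalue of the matrix `Φ(λ)` has
absolute value `1`. -/
theorem stmt10 (n d : ℕ) (hn : 6 ≤ n) (hd : 1 ≤ d) (i j : Fin n) (hij : i ≠ j)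
    (lam : MulAut (FreeGroup (Fin n)))
    (h1 : lam (FreeGroup.of i) = FreeGroup.of j * FreeGroup.of i)
    (h2 : ∀ k : Fin n, k ≠ i → lam (FreeGroup.of k) = FreeGroup.of k)
    (Φ : MulAut (FreeGroup (Fin n)) →* Matrix.SpecialLinearGroup (Fin d) ℝ)
    (μ : ℂ)
    (hμ : μ ∈ spectrum ℂ
      (((Φ lam : Matrix (Fin d) (Fin d) ℝ)).map (fun x : ℝ => (x : ℂ)))) :
    ‖μ‖ = 1 := by
  classical
  -- pick two auxiliary indices k ≠ l, both different from i and j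
  have hcard : 1 < (({i, j} : Finset (Fin n))ᶜ).card := by
    have h2' : ({i, j} : Finset (Fin n)).card ≤ 2 :=
      (Finset.card_insert_le _ _).trans (by simp)
    have hc := Finset.card_compl ({i, j} : Finset (Fin n))
    have hcf : Fintype.card (Fin n) = n := Fintype.card_fin n
    omega
  obtain ⟨k, hk, l, hl, hkl⟩ := Finset.one_lt_card.mp hcard
  rw [Finset.mem_compl, Finset.mem_insert, Finset.mem_singleton] at hk hl
  push_neg at hk hl
  obtain ⟨hki, hkj⟩ := hk
  obtain ⟨hli, hlj⟩ := hl
  have nji : j ≠ i := hij.symm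
  have nik : i ≠ k := hki.symm
  have njk : j ≠ k := hkj.symm
  have nil' : i ≠ l := hli.symm
  have njl : j ≠ l := hlj.symm
  have nlk : l ≠ k := hkl.symm
  set A := Stmt10Aux.lmul k j njk with hgA
  set B := Stmt10Aux.bmap i j k hij hki hkj with hgB
  set C := Stmt10Aux.lmul l j njl with hgC
  set D := Stmt10Aux.rmul k l nlk with hgD
  set E := Stmt10Aux.lmul k l nlk with hgE
  set F := Stmt10Aux.rmul l j njl with hgF
  have ej : lam (FreeGroup.of j) = FreeGroup.of j := h2 j nji
  have ek : lam (FreeGroup.of k) = FreeGroup.of k := h2 k hki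
  have el : lam (FreeGroup.of l) = FreeGroup.of l := h2 l hli
  have cA : A * lam = lam * A := by
    apply Stmt10Aux.autExt
    intro t
    simp only [MulAut.mul_apply]
    by_cases hti : t = i
    · subst hti
      simp [hgA, Stmt10Aux.lmul, h1, ej, ek, el, hij, nji, nik, hki, njk, hkj, nil', hli,
        njl, hlj, hkl, nlk, map_mul, map_inv, mul_assoc]
    · by_cases htk : t = k
      · subst htk
        simp [hgA, Stmt10Aux.lmul, h1, ej, ek, el, hij, nji, nik, hki, njk, hkj, nil', hli,
          njl, hlj, hkl, nlk, map_mul, map_inv, mul_assoc]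
      · simp [hgA, Stmt10Aux.lmul, h2 t hti, htk, map_mul, map_inv, mul_assoc]
  have cB : B * lam = lam * B := by
    apply Stmt10Aux.autExt
    intro t
    simp only [MulAut.mul_apply]
    by_cases hti : t = i
    · subst hti
      simp [hgB, Stmt10Aux.bmap, h1, ej, ek, el, hij, nji, nik, hki, njk, hkj, nil', hli,
        njl, hlj, hkl, nlk, map_mul, map_inv, mul_assoc]
    · by_cases htj : t = j
      · subst htj
        simp [hgB, Stmt10Aux.bmap, h1, ej, ek, el, hij, nji, nik, hki, njk, hkj, nil', hli,
          njl, hlj, hkl, nlk, map_mul, map_inv, mul_assoc]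
      · simp [hgB, Stmt10Aux.bmap, h2 t hti, hti, htj, map_mul, map_inv, mul_assoc]
  have cC : C * lam = lam * C := by
    apply Stmt10Aux.autExt
    intro t
    simp only [MulAut.mul_apply]
    by_cases hti : t = i
    · subst hti
      simp [hgC, Stmt10Aux.lmul, h1, ej, ek, el, hij, nji, nik, hki, njk, hkj, nil', hli,
        njl, hlj, hkl, nlk, map_mul, map_inv, mul_assoc]
    · by_cases htl : t = l
      · subst htl
        simp [hgC, Stmt10Aux.lmul, h1, ej, ek, el, hij, nji, nik, hki, njk, hkj, nil', hli,
          njl, hlj, hkl, nlk, map_mul, map_inv, mul_assoc]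
      · simp [hgC, Stmt10Aux.lmul, h2 t hti, htl, map_mul, map_inv, mul_assoc]
  have cD : D * lam = lam * D := by
    apply Stmt10Aux.autExt
    intro t
    simp only [MulAut.mul_apply]
    by_cases hti : t = i
    · subst hti
      simp [hgD, Stmt10Aux.rmul, h1, ej, ek, el, hij, nji, nik, hki, njk, hkj, nil', hli,
        njl, hlj, hkl, nlk, map_mul, map_inv, mul_assoc]
    · by_cases htk : t = k
      · subst htk
        simp [hgD, Stmt10Aux.rmul, h1, ej, ek, el, hij, nji, nik, hki, njk, hkj, nil', hli,
          njl, hlj, hkl, nlk, map_mul, map_inv, mul_assoc]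
      · simp [hgD, Stmt10Aux.rmul, h2 t hti, htk, map_mul, map_inv, mul_assoc]
  have cE : E * lam = lam * E := by
    apply Stmt10Aux.autExt
    intro t
    simp only [MulAut.mul_apply]
    by_cases hti : t = i
    · subst hti
      simp [hgE, Stmt10Aux.lmul, h1, ej, ek, el, hij, nji, nik, hki, njk, hkj, nil', hli,
        njl, hlj, hkl, nlk, map_mul, map_inv, mul_assoc]
    · by_cases htk : t = k
      · subst htk
        simp [hgE, Stmt10Aux.lmul, h1, ej, ek, el, hij, nji, nik, hki, njk, hkj, nil', hli,
          njl, hlj, hkl, nlk, map_mul, map_inv, mul_assoc]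
      · simp [hgE, Stmt10Aux.lmul, h2 t hti, htk, map_mul, map_inv, mul_assoc]
  have cF : F * lam = lam * F := by
    apply Stmt10Aux.autExt
    intro t
    simp only [MulAut.mul_apply]
    by_cases hti : t = i
    · subst hti
      simp [hgF, Stmt10Aux.rmul, h1, ej, ek, el, hij, nji, nik, hki, njk, hkj, nil', hli,
        njl, hlj, hkl, nlk, map_mul, map_inv, mul_assoc]
    · by_cases htl : t = l
      · subst htl
        simp [hgF, Stmt10Aux.rmul, h1, ej, ek, el, hij, nji, nik, hki, njk, hkj, nil', hli,
          njl, hlj, hkl, nlk, map_mul, map_inv, mul_assoc]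
      · simp [hgF, Stmt10Aux.rmul, h2 t hti, htl, map_mul, map_inv, mul_assoc]
  have hmain : lam = A * B * A⁻¹ * B⁻¹ * (C * D * C⁻¹ * D⁻¹) * (E * F * E⁻¹ * F⁻¹) := by
    apply Stmt10Aux.autExt
    intro t
    simp only [MulAut.mul_apply]
    by_cases hti : t = i
    · subst hti
      simp [hgA, hgB, hgC, hgD, hgE, hgF, Stmt10Aux.lmul, Stmt10Aux.rmul, Stmt10Aux.bmap,
        h1, ej, ek, el, hij, nji, nik, hki, njk, hkj, nil', hli, njl, hlj, hkl, nlk,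
        map_mul, map_inv, mul_assoc]
    · by_cases htj : t = j
      · subst htj
        simp [hgA, hgB, hgC, hgD, hgE, hgF, Stmt10Aux.lmul, Stmt10Aux.rmul, Stmt10Aux.bmap,
          h1, ej, ek, el, hij, nji, nik, hki, njk, hkj, nil', hli, njl, hlj, hkl, nlk,
          map_mul, map_inv, mul_assoc]
      · by_cases htk : t = k
        · subst htk
          simp [hgA, hgB, hgC, hgD, hgE, hgF, Stmt10Aux.lmul, Stmt10Aux.rmul, Stmt10Aux.bmap,
            h1, ej, ek, el, hij, nji, nik, hki, njk, hkj, nil', hli, njl, hlj, hkl, nlk,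
            map_mul, map_inv, mul_assoc]
        · by_cases htl : t = l
          · subst htl
            simp [hgA, hgB, hgC, hgD, hgE, hgF, Stmt10Aux.lmul, Stmt10Aux.rmul, Stmt10Aux.bmap,
              h1, ej, ek, el, hij, nji, nik, hki, njk, hkj, nil', hli, njl, hlj, hkl, nlk,
              map_mul, map_inv, mul_assoc]
          · simp [hgA, hgB, hgC, hgD, hgE, hgF, Stmt10Aux.lmul, Stmt10Aux.rmul, Stmt10Aux.bmap,
              h2 t hti, hti, htj, htk, htl, map_mul, map_inv, mul_assoc]
  -- transport everything through the representation
  set χ := Stmt10Aux.chi n d Φ with hχ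
  have pairs : ∀ x : MulAut (FreeGroup (Fin n)), χ x * χ x⁻¹ = 1 ∧ χ x⁻¹ * χ x = 1 := by
    intro x
    constructor
    · rw [← map_mul, mul_inv_cancel, map_one]
    · rw [← map_mul, inv_mul_cancel, map_one]
  have comm : ∀ x : MulAut (FreeGroup (Fin n)), x * lam = lam * x → χ x * χ lam = χ lam * χ x := by
    intro x hx
    rw [← map_mul, hx, map_mul]
  have hprodEnd : χ lam = χ A * χ B * χ A⁻¹ * χ B⁻¹ *
      (χ C * χ D * χ C⁻¹ * χ D⁻¹) * (χ E * χ F * χ E⁻¹ * χ F⁻¹) := by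
    conv_lhs => rw [hmain]
    simp only [map_mul]
  -- eigenvector
  have hmm : ((Φ lam : Matrix (Fin d) (Fin d) ℝ)).map (fun x : ℝ => (x : ℂ)) =
      (algebraMap ℝ ℂ).mapMatrix ((Φ lam : Matrix (Fin d) (Fin d) ℝ)) := by
    rw [RingHom.mapMatrix_apply]
    congr 1
  have hspec : μ ∈ spectrum ℂ (χ lam) := by
    have heq : spectrum ℂ (χ lam) =
        spectrum ℂ ((algebraMap ℝ ℂ).mapMatrix ((Φ lam : Matrix (Fin d) (Fin d) ℝ))) := by
      rw [hχ, Stmt10Aux.chi_apply]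
      exact AlgEquiv.spectrum_eq _ _
    rw [heq, ← hmm]
    exact hμ
  have hev : Module.End.HasEigenvalue (χ lam) μ :=
    Module.End.hasEigenvalue_iff_mem_spectrum.mpr hspec
  obtain ⟨v, hv⟩ := hev.exists_hasEigenvector
  have hfv : (χ lam) v = μ • v := Module.End.mem_eigenspace_iff.mp hv.1
  exact Stmt10Aux.aux_abs_eq_one (χ lam) (χ A) (χ B) (χ C) (χ D) (χ E) (χ F)
    (χ A⁻¹) (χ B⁻¹) (χ C⁻¹) (χ D⁻¹) (χ E⁻¹) (χ F⁻¹)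
    (pairs A).1 (pairs A).2 (pairs B).1 (pairs B).2 (pairs C).1 (pairs C).2
    (pairs D).1 (pairs D).2 (pairs E).1 (pairs E).2 (pairs F).1 (pairs F).2
    (comm A cA) (comm B cB) (comm C cC) (comm D cD) (comm E cE) (comm F cF)
    hprodEnd hv.2 hfv
end

section
/- Let u_1, u_2, v_1, v_2 be unit vectors in Euclidean 3-space ℝ^3 satisfying: (1) u_1 + u_2 = v_1 + v_2; (2) ⟨u_1, u_2⟩ = 0 and ⟨v_1, v_2⟩ = 0; and (3) ⟨u_1 − u_2, v_1 − v_2⟩ = 0. Let A be the additive subgroup (ℤ-submodule) of ℝ^3 generated by u_1, u_2, v_1, v_2. Then A is discrete (there exists ε > 0 such that every non-zero element of A has norm at least ε) and A spans ℝ^3 as a real vector space; in particular A is not contained in any plane. -/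
/-- If `u₁, u₂, v₁, v₂` are unit vectors in Euclidean 3-space with
`u₁ + u₂ = v₁ + v₂`, `⟪u₁,u₂⟫ = ⟪v₁,v₂⟫ = 0` and `⟪u₁ - u₂, v₁ - v₂⟫ = 0`, then the
additive subgroup `A` they generate is discrete and spans `ℝ³`; in particular `A` is
not contained in any plane. -/
theorem stmt16 (u₁ u₂ v₁ v₂ : EuclideanSpace ℝ (Fin 3))
    (hu₁ : ‖u₁‖ = 1) (hu₂ : ‖u₂‖ = 1) (hv₁ : ‖v₁‖ = 1) (hv₂ : ‖v₂‖ = 1)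
    (hsum : u₁ + u₂ = v₁ + v₂)
    (hu : (inner ℝ u₁ u₂ : ℝ) = 0) (hv : (inner ℝ v₁ v₂ : ℝ) = 0)
    (hdiff : (inner ℝ (u₁ - u₂) (v₁ - v₂) : ℝ) = 0) :
    (∃ ε > (0 : ℝ), ∀ x ∈ AddSubgroup.closure {u₁, u₂, v₁, v₂}, x ≠ 0 → ε ≤ ‖x‖) ∧
    Submodule.span ℝ ({u₁, u₂, v₁, v₂} : Set (EuclideanSpace ℝ (Fin 3))) = ⊤ := by
  set s : EuclideanSpace ℝ (Fin 3) := u₁ + u₂ with hs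
  set du : EuclideanSpace ℝ (Fin 3) := u₁ - u₂ with hdu
  set dv : EuclideanSpace ℝ (Fin 3) := v₁ - v₂ with hdv
  -- basic inner products
  have h11 : (inner ℝ u₁ u₁ : ℝ) = 1 := by
    rw [real_inner_self_eq_norm_sq, hu₁]; norm_num [Fin.ext_iff]
  have h22 : (inner ℝ u₂ u₂ : ℝ) = 1 := by
    rw [real_inner_self_eq_norm_sq, hu₂]; norm_num [Fin.ext_iff]
  have k11 : (inner ℝ v₁ v₁ : ℝ) = 1 := by
    rw [real_inner_self_eq_norm_sq, hv₁]; norm_num [Fin.ext_iff]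
  have k22 : (inner ℝ v₂ v₂ : ℝ) = 1 := by
    rw [real_inner_self_eq_norm_sq, hv₂]; norm_num [Fin.ext_iff]
  have hu' : (inner ℝ u₂ u₁ : ℝ) = 0 := by rw [real_inner_comm]; exact hu
  have hv' : (inner ℝ v₂ v₁ : ℝ) = 0 := by rw [real_inner_comm]; exact hv
  have hsdu : (inner ℝ s du : ℝ) = 0 := by
    simp [hs, hdu, inner_add_left, inner_sub_right, h11, h22, hu, hu', hu₁, hu₂]
  have hsdv : (inner ℝ s dv : ℝ) = 0 := by
    rw [hsum, hdv]
    simp [inner_add_left, inner_sub_right, k11, k22, hv, hv', hv₁, hv₂]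
  have hdudv : (inner ℝ du dv : ℝ) = 0 := hdiff
  have hss : (inner ℝ s s : ℝ) = 2 := by
    rw [hs, inner_add_left, inner_add_right, inner_add_right, h11, hu, hu', h22]; norm_num
  have hdd : (inner ℝ du du : ℝ) = 2 := by
    rw [hdu, inner_sub_left, inner_sub_right, inner_sub_right, h11, hu, hu', h22]; norm_num
  have hee : (inner ℝ dv dv : ℝ) = 2 := by
    rw [hdv, inner_sub_left, inner_sub_right, inner_sub_right, k11, hv, hv', k22]; norm_num
  -- generator inner products
  have gu₁s : (inner ℝ u₁ s : ℝ) = 1 := by simp [hs, inner_add_right, h11, hu, hu₁]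
  have gu₂s : (inner ℝ u₂ s : ℝ) = 1 := by simp [hs, inner_add_right, h22, hu', hu₂]
  have gv₁s : (inner ℝ v₁ s : ℝ) = 1 := by
    rw [hsum]; simp [inner_add_right, k11, hv, hv₁]
  have gv₂s : (inner ℝ v₂ s : ℝ) = 1 := by
    rw [hsum]; simp [inner_add_right, k22, hv', hv₂]
  have gu₁du : (inner ℝ u₁ du : ℝ) = 1 := by simp [hdu, inner_sub_right, h11, hu, hu₁]
  have gu₂du : (inner ℝ u₂ du : ℝ) = -1 := by simp [hdu, inner_sub_right, h22, hu', hu₂]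
  have gv₁dv : (inner ℝ v₁ dv : ℝ) = 1 := by simp [hdv, inner_sub_right, k11, hv, hv₁]
  have gv₂dv : (inner ℝ v₂ dv : ℝ) = -1 := by simp [hdv, inner_sub_right, k22, hv', hv₂]
  have h2v₁ : v₁ + v₁ = s + dv := by rw [hsum, hdv]; abel
  have h2v₂ : v₂ + v₂ = s - dv := by rw [hsum, hdv]; abel
  have h2u₁ : u₁ + u₁ = s + du := by rw [hs, hdu]; abel
  have h2u₂ : u₂ + u₂ = s - du := by rw [hs, hdu]; abel
  have hdvdu : (inner ℝ dv du : ℝ) = 0 := by rw [real_inner_comm]; exact hdudv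
  have gv₁du : (inner ℝ v₁ du : ℝ) = 0 := by
    have : (inner ℝ (v₁ + v₁) du : ℝ) = 0 := by
      rw [h2v₁]; simp [inner_add_left, hsdu, hdvdu]
    rw [inner_add_left] at this; linarith
  have gv₂du : (inner ℝ v₂ du : ℝ) = 0 := by
    have : (inner ℝ (v₂ + v₂) du : ℝ) = 0 := by
      rw [h2v₂]; simp [inner_sub_left, hsdu, hdvdu]
    rw [inner_add_left] at this; linarith
  have gu₁dv : (inner ℝ u₁ dv : ℝ) = 0 := by
    have : (inner ℝ (u₁ + u₁) dv : ℝ) = 0 := by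
      rw [h2u₁]; simp [inner_add_left, hsdv, hdudv]
    rw [inner_add_left] at this; linarith
  have gu₂dv : (inner ℝ u₂ dv : ℝ) = 0 := by
    have : (inner ℝ (u₂ + u₂) dv : ℝ) = 0 := by
      rw [h2u₂]; simp [inner_sub_left, hsdv, hdudv]
    rw [inner_add_left] at this; linarith
  -- orthonormal family
  set c : ℝ := (Real.sqrt 2)⁻¹ with hc
  have h2pos : (0:ℝ) < Real.sqrt 2 := by positivity
  have hcc : c * c * 2 = 1 := by
    rw [hc, ← mul_inv]
    rw [Real.mul_self_sqrt (by norm_num : (0:ℝ) ≤ 2)]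
    norm_num
  set w : Fin 3 → EuclideanSpace ℝ (Fin 3) := ![s, du, dv] with hw
  set e : Fin 3 → EuclideanSpace ℝ (Fin 3) := fun i => c • w i with he'
  have key2 : ∀ a b : EuclideanSpace ℝ (Fin 3),
      (inner ℝ (c • a) (c • b) : ℝ) = c * c * inner ℝ a b := fun a b => by
    rw [real_inner_smul_left, real_inner_smul_right]; ring
  have horth : Orthonormal ℝ e := by
    rw [orthonormal_iff_ite]
    intro i j
    have hdus : (inner ℝ du s : ℝ) = 0 := by rw [real_inner_comm]; exact hsdu
    have hdvs : (inner ℝ dv s : ℝ) = 0 := by rw [real_inner_comm]; exact hsdv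
    fin_cases i <;> fin_cases j
    · refine (key2 s s).trans ?_; rw [hss]; norm_num; linarith [hcc]
    · refine (key2 s du).trans ?_; rw [hsdu]; norm_num [Fin.ext_iff]
    · refine (key2 s dv).trans ?_; rw [hsdv]; norm_num [Fin.ext_iff]
    · refine (key2 du s).trans ?_; rw [hdus]; norm_num [Fin.ext_iff]
    · refine (key2 du du).trans ?_; rw [hdd]; norm_num; linarith [hcc]
    · refine (key2 du dv).trans ?_; rw [hdudv]; norm_num [Fin.ext_iff]
    · refine (key2 dv s).trans ?_; rw [hdvs]; norm_num [Fin.ext_iff]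
    · refine (key2 dv du).trans ?_; rw [hdvdu]; norm_num [Fin.ext_iff]
    · refine (key2 dv dv).trans ?_; rw [hee]; norm_num; linarith [hcc]
  have hspan_e : Submodule.span ℝ (Set.range e) = ⊤ := by
    apply horth.linearIndependent.span_eq_top_of_card_eq_finrank
    exact (finrank_euclideanSpace_fin).symm
  -- if x is orthogonal to s, du, dv then x = 0
  have hzero : ∀ x : EuclideanSpace ℝ (Fin 3), (inner ℝ x s : ℝ) = 0 → (inner ℝ x du : ℝ) = 0 →
      (inner ℝ x dv : ℝ) = 0 → x = 0 := by
    intro x h1 h2 h3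
    have hall : ∀ y : EuclideanSpace ℝ (Fin 3), (inner ℝ x y : ℝ) = 0 := by
      intro y
      have hy : y ∈ Submodule.span ℝ (Set.range e) := by rw [hspan_e]; trivial
      induction hy using Submodule.span_induction with
      | mem z hz =>
        obtain ⟨i, rfl⟩ := hz
        have hsm : ∀ a : EuclideanSpace ℝ (Fin 3), (inner ℝ x a : ℝ) = 0 →
            (inner ℝ x (c • a) : ℝ) = 0 := fun a ha => by
          rw [real_inner_smul_right, ha, mul_zero]
        fin_cases i
        · exact hsm s h1
        · exact hsm du h2
        · exact hsm dv h3
      | zero => simp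
      | add a b _ _ ha hb => rw [inner_add_right, ha, hb]; ring
      | smul r a _ ha => rw [real_inner_smul_right, ha]; ring
    have := hall x
    exact inner_self_eq_zero.mp this
  -- membership in closure gives integer coordinates
  have key : ∀ x ∈ AddSubgroup.closure ({u₁, u₂, v₁, v₂} : Set (EuclideanSpace ℝ (Fin 3))),
      ∃ a b c : ℤ, (inner ℝ x s : ℝ) = a ∧ (inner ℝ x du : ℝ) = b ∧ (inner ℝ x dv : ℝ) = c := by
    intro x hx
    induction hx using AddSubgroup.closure_induction with
    | mem z hz =>
      rcases hz with rfl | rfl | rfl | rfl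
      · exact ⟨1, 1, 0, by push_cast; exact ⟨gu₁s, gu₁du, gu₁dv⟩⟩
      · exact ⟨1, -1, 0, by push_cast; exact ⟨gu₂s, gu₂du, gu₂dv⟩⟩
      · exact ⟨1, 0, 1, by push_cast; exact ⟨gv₁s, gv₁du, gv₁dv⟩⟩
      · exact ⟨1, 0, -1, by push_cast; exact ⟨gv₂s, gv₂du, gv₂dv⟩⟩
    | zero => exact ⟨0, 0, 0, by simp⟩
    | add a b _ _ ha hb =>
      obtain ⟨a1, a2, a3, ha1, ha2, ha3⟩ := ha
      obtain ⟨b1, b2, b3, hb1, hb2, hb3⟩ := hb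
      exact ⟨a1 + b1, a2 + b2, a3 + b3, by
        push_cast
        simp [inner_add_left, ha1, ha2, ha3, hb1, hb2, hb3]⟩
    | neg a _ ha =>
      obtain ⟨a1, a2, a3, ha1, ha2, ha3⟩ := ha
      exact ⟨-a1, -a2, -a3, by
        push_cast
        simp [inner_neg_left, ha1, ha2, ha3]⟩
  -- norm bounds for s, du, dv
  have hns : ‖s‖ ≤ 2 := by
    calc ‖s‖ ≤ ‖u₁‖ + ‖u₂‖ := norm_add_le _ _
    _ = 2 := by rw [hu₁, hu₂]; norm_num [Fin.ext_iff]
  have hndu : ‖du‖ ≤ 2 := by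
    calc ‖du‖ ≤ ‖u₁‖ + ‖u₂‖ := norm_sub_le _ _
    _ = 2 := by rw [hu₁, hu₂]; norm_num [Fin.ext_iff]
  have hndv : ‖dv‖ ≤ 2 := by
    calc ‖dv‖ ≤ ‖v₁‖ + ‖v₂‖ := norm_sub_le _ _
    _ = 2 := by rw [hv₁, hv₂]; norm_num [Fin.ext_iff]
  have main : ∀ (x : EuclideanSpace ℝ (Fin 3)) (y : EuclideanSpace ℝ (Fin 3)) (n : ℤ), (inner ℝ x y : ℝ) = n → n ≠ 0 → ‖y‖ ≤ 2 →
      (1:ℝ)/2 ≤ ‖x‖ := by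
    intro x y n hn hn0 hy
    have h1 : (1:ℝ) ≤ |(n:ℝ)| := by
      rw [← Int.cast_abs]
      exact_mod_cast Int.one_le_abs hn0
    have h2 : |(inner ℝ x y : ℝ)| ≤ ‖x‖ * ‖y‖ := abs_real_inner_le_norm x y
    rw [hn] at h2
    have h3 : (1:ℝ) ≤ ‖x‖ * 2 := by
      calc (1:ℝ) ≤ |(n:ℝ)| := h1
      _ ≤ ‖x‖ * ‖y‖ := h2
      _ ≤ ‖x‖ * 2 := by
          apply mul_le_mul_of_nonneg_left hy (norm_nonneg x)
    linarith
  constructor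
  · refine ⟨1/2, by norm_num, fun x hx hx0 => ?_⟩
    obtain ⟨a, b, d, ha, hb, hd⟩ := key x hx
    by_cases haz : a = 0
    · by_cases hbz : b = 0
      · by_cases hdz : d = 0
        · exact absurd (hzero x (by rw [ha, haz]; simp) (by rw [hb, hbz]; simp)
            (by rw [hd, hdz]; simp)) hx0
        · exact main x dv d hd hdz hndv
      · exact main x du b hb hbz hndu
    · exact main x s a ha haz hns
  · rw [eq_top_iff, ← hspan_e]
    rw [Submodule.span_le]
    rintro z ⟨i, rfl⟩
    have hmem : ∀ y ∈ ({u₁, u₂, v₁, v₂} : Set (EuclideanSpace ℝ (Fin 3))),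
        y ∈ Submodule.span ℝ ({u₁, u₂, v₁, v₂} : Set (EuclideanSpace ℝ (Fin 3))) := fun y hy =>
      Submodule.subset_span hy
    have hu₁m := hmem u₁ (by simp)
    have hu₂m := hmem u₂ (by simp)
    have hv₁m := hmem v₁ (by simp)
    have hv₂m := hmem v₂ (by simp)
    fin_cases i
    · exact Submodule.smul_mem _ _ (Submodule.add_mem _ hu₁m hu₂m)
    · exact Submodule.smul_mem _ _ (Submodule.sub_mem _ hu₁m hu₂m)
    · exact Submodule.smul_mem _ _ (Submodule.sub_mem _ hv₁m hv₂m)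
end

section
/- Let u_1, u_2, v_1, v_2 be unit vectors in Euclidean 3-space ℝ^3 satisfying: (1) u_1 + u_2 = v_1 + v_2; (2) ⟨u_1, u_2⟩ = 0 and ⟨v_1, v_2⟩ = 0; and (3) ⟨u_1 − u_2, v_1 − v_2⟩ = 0. Then there exists a linear isometry e of ℝ^3 with e(u_1) = (1/√2)(1,1,0), e(u_2) = (1/√2)(1,−1,0), e(v_1) = (1/√2)(1,0,1), and e(v_2) = (1/√2)(1,0,−1). Consequently e maps the additive subgroup generated by u_1, u_2, v_1, v_2 onto the scaled face-centred cubic lattice { (1/√2)(a,b,c) : a, b, c ∈ ℤ, a + b + c even }. -/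
noncomputable section

private def vec17 (a b c : ℝ) : EuclideanSpace ℝ (Fin 3) :=
  (WithLp.equiv 2 (Fin 3 → ℝ)).symm ![a, b, c]

private lemma smul_vec17 (t a b c : ℝ) : t • vec17 a b c = vec17 (t*a) (t*b) (t*c) := by
  ext i; fin_cases i <;> simp [vec17]

private lemma add_vec17 (a b c a' b' c' : ℝ) :
    vec17 a b c + vec17 a' b' c' = vec17 (a+a') (b+b') (c+c') := by
  ext i; fin_cases i <;> simp [vec17]

private lemma neg_vec17 (a b c : ℝ) : -vec17 a b c = vec17 (-a) (-b) (-c) := by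
  ext i; fin_cases i <;> simp [vec17]

private lemma vec17_zero : vec17 0 0 0 = 0 := by
  ext i; fin_cases i <;> simp [vec17]

private lemma zsmul_vec17 (n : ℤ) (a b c : ℝ) : n • vec17 a b c = vec17 (n*a) (n*b) (n*c) := by
  rw [← Int.cast_smul_eq_zsmul ℝ n, smul_vec17]

private lemma latt17 :
    (AddSubgroup.closure {(Real.sqrt 2)⁻¹ • vec17 1 1 0, (Real.sqrt 2)⁻¹ • vec17 1 (-1) 0,
        (Real.sqrt 2)⁻¹ • vec17 1 0 1, (Real.sqrt 2)⁻¹ • vec17 1 0 (-1)}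
          : Set (EuclideanSpace ℝ (Fin 3)))
      = {x : EuclideanSpace ℝ (Fin 3) | ∃ a b c : ℤ, Even (a + b + c) ∧
          x = (Real.sqrt 2)⁻¹ • vec17 (a : ℝ) (b : ℝ) (c : ℝ)} := by
  set s : ℝ := (Real.sqrt 2)⁻¹ with hs
  ext x
  constructor
  · intro hx
    induction hx using AddSubgroup.closure_induction'' with
    | mem y hy =>
      rcases hy with h | h | h | h
      · exact ⟨1, 1, 0, ⟨1, by ring⟩, by rw [h]; norm_num⟩
      · exact ⟨1, -1, 0, ⟨0, by ring⟩, by rw [h]; norm_num⟩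
      · exact ⟨1, 0, 1, ⟨1, by ring⟩, by rw [h]; norm_num⟩
      · rw [Set.mem_singleton_iff] at h
        exact ⟨1, 0, -1, ⟨0, by ring⟩, by rw [h]; norm_num⟩
    | neg_mem y hy =>
      rcases hy with h | h | h | h
      · exact ⟨-1, -1, 0, ⟨-1, by ring⟩, by rw [h, ← smul_neg, neg_vec17]; norm_num⟩
      · exact ⟨-1, 1, 0, ⟨0, by ring⟩, by rw [h, ← smul_neg, neg_vec17]; norm_num⟩
      · exact ⟨-1, 0, -1, ⟨-1, by ring⟩, by rw [h, ← smul_neg, neg_vec17]; norm_num⟩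
      · rw [Set.mem_singleton_iff] at h
        exact ⟨-1, 0, 1, ⟨0, by ring⟩, by rw [h, ← smul_neg, neg_vec17]; norm_num⟩
    | zero => exact ⟨0, 0, 0, ⟨0, by ring⟩, by push_cast; rw [vec17_zero, smul_zero]⟩
    | add y z _ _ hy hz =>
      obtain ⟨a, b, c, he, rfl⟩ := hy
      obtain ⟨a', b', c', he', rfl⟩ := hz
      refine ⟨a + a', b + b', c + c', ?_, ?_⟩
      · have := he.add he'
        rwa [show a + a' + (b + b') + (c + c') = a + b + c + (a' + b' + c') by ring]
      · rw [← smul_add, add_vec17]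
        push_cast
        ring_nf
  · rintro ⟨a, b, c, ⟨r, hr⟩, rfl⟩
    have key : s • vec17 (a : ℝ) (b : ℝ) (c : ℝ)
        = b • (s • vec17 1 1 0) + (r - b) • (s • vec17 1 0 1)
            + (r - b - c) • (s • vec17 1 0 (-1)) := by
      rw [smul_comm b s, smul_comm (r-b) s, smul_comm (r-b-c) s, zsmul_vec17, zsmul_vec17,
        zsmul_vec17, ← smul_add, ← smul_add, add_vec17, add_vec17]
      have ha : (a : ℝ) = 2*r - b - c := by
        have : (a : ℝ) + b + c = r + r := by exact_mod_cast congrArg Int.cast hr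
        linarith
      congr 1 <;> push_cast <;> ring_nf <;> push_cast [ha] <;> ring
    rw [key]
    refine AddSubgroup.add_mem _ (AddSubgroup.add_mem _ ?_ ?_) ?_ <;>
      refine AddSubgroup.zsmul_mem _ (AddSubgroup.subset_closure ?_) _
    · left; rfl
    · right; right; left; rfl
    · right; right; right; rfl

end

/-- If `u₁, u₂, v₁, v₂` are unit vectors in Euclidean 3-space with
`u₁ + u₂ = v₁ + v₂`, `⟪u₁,u₂⟫ = ⟪v₁,v₂⟫ = 0` and `⟪u₁ - u₂, v₁ - v₂⟫ = 0`, then some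
linear isometry `e` of `ℝ³` carries them to `(1/√2)(1,1,0)`, `(1/√2)(1,-1,0)`,
`(1/√2)(1,0,1)`, `(1/√2)(1,0,-1)` respectively; consequently `e` maps the additive
subgroup they generate onto the scaled face-centred cubic lattice
`{(1/√2)(a,b,c) : a,b,c ∈ ℤ, a+b+c even}`. -/
theorem stmt17 (u₁ u₂ v₁ v₂ : EuclideanSpace ℝ (Fin 3))
    (hu₁ : ‖u₁‖ = 1) (hu₂ : ‖u₂‖ = 1) (hv₁ : ‖v₁‖ = 1) (hv₂ : ‖v₂‖ = 1)
    (hsum : u₁ + u₂ = v₁ + v₂)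
    (hu : (inner ℝ u₁ u₂ : ℝ) = 0) (hv : (inner ℝ v₁ v₂ : ℝ) = 0)
    (hdiff : (inner ℝ (u₁ - u₂) (v₁ - v₂) : ℝ) = 0) :
    ∃ e : EuclideanSpace ℝ (Fin 3) ≃ₗᵢ[ℝ] EuclideanSpace ℝ (Fin 3),
      e u₁ = (Real.sqrt 2)⁻¹ • (WithLp.equiv 2 (Fin 3 → ℝ)).symm ![1, 1, 0] ∧
      e u₂ = (Real.sqrt 2)⁻¹ • (WithLp.equiv 2 (Fin 3 → ℝ)).symm ![1, -1, 0] ∧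
      e v₁ = (Real.sqrt 2)⁻¹ • (WithLp.equiv 2 (Fin 3 → ℝ)).symm ![1, 0, 1] ∧
      e v₂ = (Real.sqrt 2)⁻¹ • (WithLp.equiv 2 (Fin 3 → ℝ)).symm ![1, 0, -1] ∧
      e '' (AddSubgroup.closure {u₁, u₂, v₁, v₂} : Set (EuclideanSpace ℝ (Fin 3)))
        = {x : EuclideanSpace ℝ (Fin 3) | ∃ a b c : ℤ, Even (a + b + c) ∧
            x = (Real.sqrt 2)⁻¹ •
              (WithLp.equiv 2 (Fin 3 → ℝ)).symm ![(a : ℝ), (b : ℝ), (c : ℝ)]} := by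
  classical
  set s : ℝ := (Real.sqrt 2)⁻¹ with hs
  have hs2 : s * s * 2 = 1 := by
    rw [hs, ← mul_inv, Real.mul_self_sqrt (by norm_num : (0:ℝ) ≤ 2)]
    norm_num
  set f : Fin 3 → EuclideanSpace ℝ (Fin 3) :=
    ![s • (u₁ + u₂), s • (u₁ - u₂), s • (v₁ - v₂)] with hf
  have h21 : (inner ℝ u₂ u₁ : ℝ) = 0 := by rw [real_inner_comm]; exact hu
  have h21' : (inner ℝ v₂ v₁ : ℝ) = 0 := by rw [real_inner_comm]; exact hv
  have e1 : (inner ℝ u₁ u₁ : ℝ) = 1 := by rw [real_inner_self_eq_norm_sq, hu₁]; norm_num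
  have e2 : (inner ℝ u₂ u₂ : ℝ) = 1 := by rw [real_inner_self_eq_norm_sq, hu₂]; norm_num
  have e3 : (inner ℝ v₁ v₁ : ℝ) = 1 := by rw [real_inner_self_eq_norm_sq, hv₁]; norm_num
  have e4 : (inner ℝ v₂ v₂ : ℝ) = 1 := by rw [real_inner_self_eq_norm_sq, hv₂]; norm_num
  have g00 : (inner ℝ (u₁+u₂) (u₁+u₂) : ℝ) = 2 := by
    rw [inner_add_add_self, hu, h21, e1, e2]; ring
  have g01 : (inner ℝ (u₁+u₂) (u₁-u₂) : ℝ) = 0 := by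
    rw [inner_sub_right, inner_add_left, inner_add_left, hu, h21, e1, e2]; ring
  have g02 : (inner ℝ (u₁+u₂) (v₁-v₂) : ℝ) = 0 := by
    rw [hsum, inner_sub_right, inner_add_left, inner_add_left, hv, h21', e3, e4]; ring
  have g10 : (inner ℝ (u₁-u₂) (u₁+u₂) : ℝ) = 0 := by
    rw [real_inner_comm]; exact g01
  have g11 : (inner ℝ (u₁-u₂) (u₁-u₂) : ℝ) = 2 := by
    rw [inner_sub_sub_self, hu, h21, e1, e2]; ring
  have g20 : (inner ℝ (v₁-v₂) (u₁+u₂) : ℝ) = 0 := by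
    rw [real_inner_comm]; exact g02
  have g21 : (inner ℝ (v₁-v₂) (u₁-u₂) : ℝ) = 0 := by
    rw [real_inner_comm]; exact hdiff
  have g22 : (inner ℝ (v₁-v₂) (v₁-v₂) : ℝ) = 2 := by
    rw [inner_sub_sub_self, hv, h21', e3, e4]; ring
  have horth : Orthonormal ℝ f := by
    rw [orthonormal_iff_ite]
    intro i j
    fin_cases i <;> fin_cases j
    · show (inner ℝ (s•(u₁+u₂)) (s•(u₁+u₂)) : ℝ) = 1
      rw [real_inner_smul_left, real_inner_smul_right, g00]; linarith
    · show (inner ℝ (s•(u₁+u₂)) (s•(u₁-u₂)) : ℝ) = 0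
      rw [real_inner_smul_left, real_inner_smul_right, g01]; ring
    · show (inner ℝ (s•(u₁+u₂)) (s•(v₁-v₂)) : ℝ) = 0
      rw [real_inner_smul_left, real_inner_smul_right, g02]; ring
    · show (inner ℝ (s•(u₁-u₂)) (s•(u₁+u₂)) : ℝ) = 0
      rw [real_inner_smul_left, real_inner_smul_right, g10]; ring
    · show (inner ℝ (s•(u₁-u₂)) (s•(u₁-u₂)) : ℝ) = 1
      rw [real_inner_smul_left, real_inner_smul_right, g11]; linarith
    · show (inner ℝ (s•(u₁-u₂)) (s•(v₁-v₂)) : ℝ) = 0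
      rw [real_inner_smul_left, real_inner_smul_right, hdiff]; ring
    · show (inner ℝ (s•(v₁-v₂)) (s•(u₁+u₂)) : ℝ) = 0
      rw [real_inner_smul_left, real_inner_smul_right, g20]; ring
    · show (inner ℝ (s•(v₁-v₂)) (s•(u₁-u₂)) : ℝ) = 0
      rw [real_inner_smul_left, real_inner_smul_right, g21]; ring
    · show (inner ℝ (s•(v₁-v₂)) (s•(v₁-v₂)) : ℝ) = 1
      rw [real_inner_smul_left, real_inner_smul_right, g22]; linarith
  let b := basisOfLinearIndependentOfCardEqFinrank horth.linearIndependent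
    (by simp [finrank_euclideanSpace_fin])
  have hb : ⇑b = f := coe_basisOfLinearIndependentOfCardEqFinrank _ _
  let ob := b.toOrthonormalBasis (by rwa [hb])
  let e : EuclideanSpace ℝ (Fin 3) ≃ₗᵢ[ℝ] EuclideanSpace ℝ (Fin 3) := ob.repr
  have he : ∀ i, e (f i) = EuclideanSpace.single i 1 := by
    intro i
    have : f i = ob i := by rw [Module.Basis.coe_toOrthonormalBasis, hb]
    rw [this]
    exact ob.repr_self i
  have hss : s * s = 1/2 := by linarith
  -- expressions of the four vectors in the basis
  have hu₁f : u₁ = s • f 0 + s • f 1 := by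
    show u₁ = s • (s • (u₁+u₂)) + s • (s • (u₁-u₂))
    rw [smul_smul, smul_smul, hss]
    match_scalars <;> ring
  have hu₂f : u₂ = s • f 0 - s • f 1 := by
    show u₂ = s • (s • (u₁+u₂)) - s • (s • (u₁-u₂))
    rw [smul_smul, smul_smul, hss]
    match_scalars <;> ring
  have hv₁f : v₁ = s • f 0 + s • f 2 := by
    show v₁ = s • (s • (u₁+u₂)) + s • (s • (v₁-v₂))
    rw [hsum, smul_smul, smul_smul, hss]
    match_scalars <;> ring
  have hv₂f : v₂ = s • f 0 - s • f 2 := by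
    show v₂ = s • (s • (u₁+u₂)) - s • (s • (v₁-v₂))
    rw [hsum, smul_smul, smul_smul, hss]
    match_scalars <;> ring
  have key1 : e u₁ = s • vec17 1 1 0 := by
    rw [hu₁f, map_add, LinearIsometryEquiv.map_smul, LinearIsometryEquiv.map_smul, he 0, he 1]
    ext i; fin_cases i <;>
      simp [vec17, EuclideanSpace.single_apply]
  have key2 : e u₂ = s • vec17 1 (-1) 0 := by
    rw [hu₂f, map_sub, LinearIsometryEquiv.map_smul, LinearIsometryEquiv.map_smul, he 0, he 1]
    ext i; fin_cases i <;>
      simp [vec17, EuclideanSpace.single_apply]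
  have key3 : e v₁ = s • vec17 1 0 1 := by
    rw [hv₁f, map_add, LinearIsometryEquiv.map_smul, LinearIsometryEquiv.map_smul, he 0, he 2]
    ext i; fin_cases i <;>
      simp [vec17, EuclideanSpace.single_apply]
  have key4 : e v₂ = s • vec17 1 0 (-1) := by
    rw [hv₂f, map_sub, LinearIsometryEquiv.map_smul, LinearIsometryEquiv.map_smul, he 0, he 2]
    ext i; fin_cases i <;>
      simp [vec17, EuclideanSpace.single_apply]
  refine ⟨e, key1, key2, key3, key4, ?_⟩
  have hco : (⇑e : EuclideanSpace ℝ (Fin 3) → EuclideanSpace ℝ (Fin 3))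
      = ⇑(AddMonoidHomClass.toAddMonoidHom e.toLinearEquiv.toAddEquiv) := rfl
  rw [hco, ← AddSubgroup.coe_map, AddMonoidHom.map_closure, ← hco]
  rw [Set.image_insert_eq, Set.image_insert_eq, Set.image_insert_eq, Set.image_singleton,
    key1, key2, key3, key4]
  exact latt17
end
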